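/- arXiv:2310.00404 — 9 statements merged into one kernel-verified Lean document; each statement's English description precedes it below -/
import Mathlib

section
/- Let Y be a nonnegative real-valued random variable and J an exponentially distributed random variable with rate λ > 0, with Y and J independent. Then for every real s ≥ 0 with s ≠ λ, E[exp(−s·max(Y − J, 0))] = (λ/(λ − s))·E[exp(−s·Y)] − (s/(λ − s))·E[exp(−λ·Y)]. -/
open MeasureTheory ProbabilityTheory Real

open Set in
lemma key_inner {l s y : ℝ} (hl : 0 < l) (hs : 0 ≤ s) (hsl : s ≠ l) (hy : 0 ≤ y) :
    ∫ j, Real.exp (-s * max (y - j) 0) ∂(expMeasure l)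
      = l / (l - s) * Real.exp (-s * y) - s / (l - s) * Real.exp (-l * y) := by
  have hne : s - l ≠ 0 := sub_ne_zero.mpr hsl
  have hne' : l - s ≠ 0 := sub_ne_zero.mpr (Ne.symm hsl)
  have hmeas : expMeasure l
      = volume.withDensity (fun x => ((exponentialPDFReal l x).toNNReal : ENNReal)) := rfl
  rw [hmeas, integral_withDensity_eq_integral_smul
    (measurable_exponentialPDFReal l).real_toNNReal]
  have h1 : ∀ x : ℝ, (exponentialPDFReal l x).toNNReal • Real.exp (-s * max (y - x) 0)
      = (Ici (0:ℝ)).indicator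
          (fun x => l * Real.exp (-(l * x)) * Real.exp (-s * max (y - x) 0)) x := by
    intro x
    rw [NNReal.smul_def, Real.coe_toNNReal _ (exponentialPDFReal_nonneg hl x), smul_eq_mul]
    have hpdf : exponentialPDFReal l x = if 0 ≤ x then l * Real.exp (-(l * x)) else 0 := by
      rw [exponentialPDFReal, gammaPDFReal]
      simp only [rpow_one, Real.Gamma_one, div_one, sub_self, rpow_zero, mul_one]
    rw [hpdf]
    by_cases h : (0:ℝ) ≤ x
    · rw [if_pos h, Set.indicator_of_mem (mem_Ici.mpr h)]
    · rw [if_neg h, Set.indicator_of_notMem (by simpa using h), zero_mul]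
  rw [integral_congr_ae (Filter.Eventually.of_forall h1), integral_indicator measurableSet_Ici,
    integral_Ici_eq_integral_Ioi, ← Ioc_union_Ioi_eq_Ioi hy]
  have hcont : Continuous (fun x : ℝ => l * Real.exp (-(l * x)) * Real.exp (-s * max (y - x) 0)) := by
    continuity
  have hint1 : IntegrableOn (fun x : ℝ => l * Real.exp (-(l * x)) * Real.exp (-s * max (y - x) 0))
      (Ioc 0 y) := hcont.integrableOn_Ioc
  have hbase : IntegrableOn (fun x : ℝ => l * Real.exp (-(l * x))) (Ioi y) := by
    have h := (exp_neg_integrableOn_Ioi y hl).const_mul l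
    simp only [neg_mul] at h
    exact h
  have hint2 : IntegrableOn (fun x : ℝ => l * Real.exp (-(l * x)) * Real.exp (-s * max (y - x) 0))
      (Ioi y) := by
    apply hbase.congr_fun _ measurableSet_Ioi
    intro x hx
    have : max (y - x) 0 = 0 := max_eq_right (by simp at hx; linarith)
    simp [this]
  rw [setIntegral_union (Ioc_disjoint_Ioi le_rfl) measurableSet_Ioi
    hint1 hint2]
  have e1 : ∫ x in Ioc 0 y, l * Real.exp (-(l * x)) * Real.exp (-s * max (y - x) 0)
      = (l * Real.exp (-(s * y))) * ((Real.exp ((s - l) * y) - 1) / (s - l)) := by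
    rw [setIntegral_congr_fun measurableSet_Ioc
      (g := fun x => (l * Real.exp (-(s * y))) * Real.exp ((s - l) * x)) ?_]
    · rw [← intervalIntegral.integral_of_le hy, intervalIntegral.integral_const_mul]
      congr 1
      have hder : ∀ x ∈ Set.uIcc (0:ℝ) y, HasDerivAt (fun u => Real.exp ((s - l) * u) / (s - l))
          (Real.exp ((s - l) * x)) x := by
        intro x _
        have h := (((hasDerivAt_id x).const_mul (s - l)).exp).div_const (s - l)
        simp only [id_eq] at h
        rw [mul_one, mul_div_assoc, div_self hne, mul_one] at h
        exact h
      rw [intervalIntegral.integral_eq_sub_of_hasDerivAt hder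
        ((continuous_exp.comp (continuous_const.mul continuous_id)).intervalIntegrable 0 y)]
      simp [sub_div]
    · intro x hx
      dsimp only
      rw [max_eq_left (sub_nonneg.mpr hx.2), mul_assoc, ← Real.exp_add, mul_assoc, ← Real.exp_add]
      congr 2
      ring
  have e2 : ∫ x in Ioi y, l * Real.exp (-(l * x)) * Real.exp (-s * max (y - x) 0)
      = Real.exp (-(l * y)) := by
    rw [setIntegral_congr_fun measurableSet_Ioi (g := fun x => l * Real.exp (-(l * x))) ?_]
    · rw [integral_const_mul]
      have h := MeasureTheory.integral_comp_mul_left_Ioi (fun u => Real.exp (-u)) y hl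
      simp only [smul_eq_mul] at h
      rw [h, integral_exp_neg_Ioi]
      field_simp
    · intro x hx
      dsimp only
      have : max (y - x) 0 = 0 := max_eq_right (by simp at hx; linarith)
      simp [this]
  rw [e1, e2]
  simp only [neg_mul]
  have hexp : Real.exp (-(s * y)) * Real.exp ((s - l) * y) = Real.exp (-(l * y)) := by
    rw [← Real.exp_add]; congr 1; ring
  have key : l * Real.exp (-(s * y)) * ((Real.exp ((s - l) * y) - 1) / (s - l))
      = (l * Real.exp (-(l * y)) - l * Real.exp (-(s * y))) / (s - l) := by
    rw [← hexp]; ring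
  rw [key]
  field_simp
  ring

/-- If `Y` is a nonnegative random variable and `J` is exponentially
distributed with rate `l > 0`, with `Y` and `J` independent, then for every `s ≥ 0` with
`s ≠ l`, `E[exp(-s·max(Y - J, 0))] = (l/(l-s))·E[exp(-s·Y)] - (s/(l-s))·E[exp(-l·Y)]`. -/
theorem lst_of_pos_part_minus_exponential
    {Ω : Type*} [MeasurableSpace Ω] (P : Measure Ω) [IsProbabilityMeasure P]
    (Y J : Ω → ℝ) (hYm : Measurable Y) (hJm : Measurable J)
    (hYnonneg : ∀ ω, 0 ≤ Y ω)
    (l : ℝ) (hl : 0 < l)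
    (hJlaw : Measure.map J P = expMeasure l)
    (hindep : IndepFun Y J P)
    (s : ℝ) (hs : 0 ≤ s) (hsl : s ≠ l) :
    ∫ ω, Real.exp (-s * max (Y ω - J ω) 0) ∂P
      = (l / (l - s)) * (∫ ω, Real.exp (-s * Y ω) ∂P)
        - (s / (l - s)) * (∫ ω, Real.exp (-l * Y ω) ∂P) := by
  have hcontf : Continuous (fun p : ℝ × ℝ => Real.exp (-s * max (p.1 - p.2) 0)) :=
    Real.continuous_exp.comp
      (continuous_const.mul ((continuous_fst.sub continuous_snd).max continuous_const))
  have hpair : P.map (fun ω => (Y ω, J ω)) = (P.map Y).prod (P.map J) :=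
    (indepFun_iff_map_prod_eq_prod_map_map hYm.aemeasurable hJm.aemeasurable).mp hindep
  have hPY : IsProbabilityMeasure (P.map Y) := Measure.isProbabilityMeasure_map hYm.aemeasurable
  have hPJ : IsProbabilityMeasure (P.map J) := by
    rw [hJlaw]; exact isProbabilityMeasure_expMeasure hl
  have hbound : ∀ p : ℝ × ℝ, ‖Real.exp (-s * max (p.1 - p.2) 0)‖ ≤ 1 := by
    intro p
    rw [Real.norm_eq_abs, abs_of_pos (Real.exp_pos _)]
    exact Real.exp_le_one_iff.mpr (by
      have := mul_nonneg hs (le_max_right (p.1 - p.2) 0)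
      linarith)
  have hintf : Integrable (fun p : ℝ × ℝ => Real.exp (-s * max (p.1 - p.2) 0))
      ((P.map Y).prod (P.map J)) :=
    (integrable_const (1:ℝ)).mono' hcontf.aestronglyMeasurable
      (Filter.Eventually.of_forall hbound)
  have step1 : ∫ ω, Real.exp (-s * max (Y ω - J ω) 0) ∂P
      = ∫ p : ℝ × ℝ, Real.exp (-s * max (p.1 - p.2) 0) ∂((P.map Y).prod (P.map J)) := by
    rw [← hpair, integral_map (hYm.prodMk hJm).aemeasurable hcontf.aestronglyMeasurable]
  rw [step1, integral_prod _ hintf]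
  have hae : ∀ᵐ y ∂(P.map Y), 0 ≤ y := by
    rw [ae_map_iff hYm.aemeasurable (measurableSet_Ici (a := (0:ℝ)))]
    exact Filter.Eventually.of_forall hYnonneg
  have step2 : ∫ y, (∫ j, Real.exp (-s * max (y - j) 0) ∂(P.map J)) ∂(P.map Y)
      = ∫ y, (l / (l - s) * Real.exp (-s * y) - s / (l - s) * Real.exp (-l * y)) ∂(P.map Y) := by
    apply integral_congr_ae
    filter_upwards [hae] with y hy
    rw [hJlaw]
    exact key_inner hl hs hsl hy
  rw [step2]
  have hintexp : ∀ c : ℝ, 0 ≤ c → Integrable (fun y => Real.exp (-c * y)) (P.map Y) := by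
    intro c hc
    refine (integrable_const (1:ℝ)).mono'
      (Continuous.aestronglyMeasurable
        (Real.continuous_exp.comp (continuous_const.mul continuous_id))) ?_
    filter_upwards [hae] with y hy
    rw [Real.norm_eq_abs, abs_of_pos (Real.exp_pos _)]
    exact Real.exp_le_one_iff.mpr (by nlinarith)
  have hm1 : AEStronglyMeasurable (fun a : ℝ => Real.exp (-s * a)) (P.map Y) :=
    (Real.continuous_exp.comp (continuous_const.mul continuous_id)).aestronglyMeasurable
  have hm2 : AEStronglyMeasurable (fun a : ℝ => Real.exp (-l * a)) (P.map Y) :=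
    (Real.continuous_exp.comp (continuous_const.mul continuous_id)).aestronglyMeasurable
  rw [integral_sub (((hintexp s hs).const_mul _)) ((hintexp l hl.le).const_mul _),
    integral_const_mul, integral_const_mul,
    integral_map hYm.aemeasurable hm1, integral_map hYm.aemeasurable hm2]
end

section
/- Let Y be a nonnegative real-valued random variable and J an exponentially distributed random variable with rate λ > 0, with Y and J independent. Then for every real s with 0 ≤ s < λ, E[exp(−s·min(Y − J, 0))] = 1 + (s/(λ − s))·P(Y < J). -/
open MeasureTheory ProbabilityTheory Real
open Set

lemma aux_A1 {l : ℝ} (hl : 0 < l) {y : ℝ} (hy : 0 ≤ y) :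
    ∫ j in Ioc 0 y, l * exp (-(l * j)) = 1 - exp (-(l * y)) := by
  rw [← intervalIntegral.integral_of_le hy,
    intervalIntegral.integral_eq_sub_of_hasDerivAt
      (f := fun a => -exp (-(l * a))) (fun x _ => hasDerivAt_neg_exp_mul_exp)
      (by apply Continuous.intervalIntegrable; continuity)]
  simp [exp_zero]; ring

lemma aux_A2 {l s : ℝ} (hl : 0 < l) (hsl : s < l) (y : ℝ) :
    ∫ j in Ioi y, (l * exp (-(s * y))) * exp (-(l - s) * j)
      = l / (l - s) * exp (-(l * y)) := by
  simp_rw [neg_mul]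
  rw [integral_const_mul, integral_comp_mul_left_Ioi (fun x => exp (-x)) y (by linarith : 0 < l - s)]
  simp only [smul_eq_mul, integral_exp_neg_Ioi]
  have h : rexp (-(s * y)) * rexp (-((l - s) * y)) = rexp (-(l * y)) := by
    rw [← exp_add]; ring_nf
  rw [div_eq_mul_inv, ← h]; ring

noncomputable def auxF (l s y : ℝ) : ℝ → ℝ :=
  fun j => (if 0 ≤ j then l * exp (-(l * j)) else 0) * exp (-s * min (y - j) 0)

lemma auxF_nonneg (l s y : ℝ) (hl : 0 ≤ l) (j : ℝ) : 0 ≤ auxF l s y j := by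
  unfold auxF; split_ifs <;> positivity

lemma auxF_eqOn1 {l s y : ℝ} (hy : 0 ≤ y) :
    Set.EqOn (auxF l s y) (fun j => l * exp (-(l * j))) (Ioc 0 y) := by
  intro j hj
  have h1 : (0:ℝ) ≤ j := hj.1.le
  have h2 : min (y - j) 0 = 0 := min_eq_right (by linarith [hj.2])
  simp [auxF, if_pos h1, h2]

lemma auxF_eqOn2 {l s y : ℝ} (hy : 0 ≤ y) :
    Set.EqOn (auxF l s y) (fun j => (l * exp (-(s * y))) * exp (-(l - s) * j)) (Ioi y) := by
  intro j hj
  have hj' : y < j := hj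
  have h1 : (0:ℝ) ≤ j := by linarith
  have h2 : min (y - j) 0 = y - j := min_eq_left (by linarith)
  simp only [auxF, if_pos h1, h2]
  rw [mul_assoc, mul_assoc, ← exp_add, neg_mul, ← exp_add]
  ring_nf

lemma auxF_intOn1 {l s y : ℝ} (hl : 0 < l) (hy : 0 ≤ y) :
    IntegrableOn (auxF l s y) (Ioc 0 y) := by
  exact IntegrableOn.congr_fun ((exp_neg_integrableOn_Ioc hl).const_mul l)
    (auxF_eqOn1 hy).symm measurableSet_Ioc

lemma auxF_intOn2 {l s y : ℝ} (hsl : s < l) (hy : 0 ≤ y) :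
    IntegrableOn (auxF l s y) (Ioi y) := by
  exact IntegrableOn.congr_fun ((exp_neg_integrableOn_Ioi y
    (by linarith : (0:ℝ) < l - s)).const_mul (l * exp (-(s * y))))
    (auxF_eqOn2 hy).symm measurableSet_Ioi

lemma auxF_integrable {l s y : ℝ} (hl : 0 < l) (hsl : s < l) (hy : 0 ≤ y) :
    Integrable (auxF l s y) := by
  have hIoi : IntegrableOn (auxF l s y) (Ioi 0) := by
    rw [← Ioc_union_Ioi_eq_Ioi hy]
    exact (auxF_intOn1 hl hy).union (auxF_intOn2 hsl hy)
  have hIci : IntegrableOn (auxF l s y) (Ici 0) := by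
    rwa [integrableOn_Ici_iff_integrableOn_Ioi]
  have hIio : IntegrableOn (auxF l s y) (Iio 0) := by
    refine IntegrableOn.congr_fun integrableOn_zero ?_ measurableSet_Iio
    intro x hx
    have hx' : ¬ (0:ℝ) ≤ x := not_le.mpr hx
    simp [auxF, hx']
  rw [← integrableOn_univ, ← Set.Iio_union_Ici (a := (0:ℝ))]
  exact hIio.union hIci

lemma auxF_integral {l s y : ℝ} (hl : 0 < l) (hsl : s < l) (hy : 0 ≤ y) :
    ∫ j, auxF l s y j = 1 + s / (l - s) * exp (-(l * y)) := by
  have h0 : ∀ x ∉ Ici (0:ℝ), auxF l s y x = 0 := by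
    intro x hx
    have hx' : ¬ (0:ℝ) ≤ x := hx
    simp [auxF, hx']
  rw [← setIntegral_eq_integral_of_forall_compl_eq_zero h0, integral_Ici_eq_integral_Ioi,
    ← Ioc_union_Ioi_eq_Ioi hy,
    setIntegral_union (Ioc_disjoint_Ioi le_rfl) measurableSet_Ioi
      (auxF_intOn1 hl hy) (auxF_intOn2 hsl hy),
    setIntegral_congr_fun measurableSet_Ioc (auxF_eqOn1 hy),
    setIntegral_congr_fun measurableSet_Ioi (auxF_eqOn2 hy),
    aux_A1 hl hy, aux_A2 hl hsl y]
  have h : l - s ≠ 0 := by linarith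
  field_simp
  ring

lemma expMeasure_eq_withDensity (l : ℝ) :
    expMeasure l = MeasureTheory.volume.withDensity (exponentialPDF l) := rfl

lemma aux_lintegral_exp {l s : ℝ} (hl : 0 < l) (hs0 : 0 ≤ s) (hsl : s < l) {y : ℝ} (hy : 0 ≤ y) :
    ∫⁻ j, ENNReal.ofReal (exp (-s * min (y - j) 0)) ∂(expMeasure l)
      = ENNReal.ofReal (1 + s / (l - s) * exp (-(l * y))) := by
  have hgm : Measurable fun j : ℝ => ENNReal.ofReal (exp (-s * min (y - j) 0)) := by
    apply Measurable.ennreal_ofReal; fun_prop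
  have hfm : Measurable (exponentialPDF l) := (measurable_exponentialPDFReal l).ennreal_ofReal
  rw [expMeasure_eq_withDensity, lintegral_withDensity_eq_lintegral_mul _ hfm hgm]
  have hpt : ∀ j : ℝ, (exponentialPDF l * fun j => ENNReal.ofReal (exp (-s * min (y - j) 0))) j
      = ENNReal.ofReal (auxF l s y j) := by
    intro j
    simp only [Pi.mul_apply, exponentialPDF_eq, auxF]
    rw [← ENNReal.ofReal_mul (by split_ifs <;> positivity)]
  simp_rw [hpt]
  rw [← ofReal_integral_eq_lintegral_ofReal (auxF_integrable hl hsl hy)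
    (Filter.Eventually.of_forall (auxF_nonneg l s y hl.le)), auxF_integral hl hsl hy]

lemma expMeasure_Ioi {l : ℝ} (hl : 0 < l) {y : ℝ} (hy : 0 ≤ y) :
    expMeasure l (Set.Ioi y) = ENNReal.ofReal (exp (-(l * y))) := by
  have hprob : IsProbabilityMeasure (expMeasure l) := isProbabilityMeasure_expMeasure hl
  have hIic : expMeasure l (Set.Iic y) = ENNReal.ofReal (1 - exp (-(l * y))) := by
    rw [expMeasure_eq_withDensity, withDensity_apply _ measurableSet_Iic,
      lintegral_exponentialPDF_eq_antiDeriv hl y, if_pos hy]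
  have hc := measure_compl (measurableSet_Iic (a := y)) (measure_ne_top (expMeasure l) _)
  rw [Set.compl_Iic] at hc
  have h1 : 0 ≤ 1 - rexp (-(l * y)) :=
    sub_nonneg.mpr (exp_le_one_iff.mpr (neg_nonpos.mpr (mul_nonneg hl.le hy)))
  rw [hc, hIic, measure_univ, ← ENNReal.ofReal_one, ← ENNReal.ofReal_sub _ h1]
  congr 1; ring


/-- If `Y` is a nonnegative random variable and `J` is exponentially
distributed with rate `l > 0`, independent of `Y`, then for every `0 ≤ s < l`,
`E[exp(-s·min(Y - J, 0))] = 1 + (s/(l-s))·P(Y < J)`. -/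
theorem lst_of_neg_part_minus_exponential
    {Ω : Type*} [MeasurableSpace Ω] (P : Measure Ω) [IsProbabilityMeasure P]
    (Y J : Ω → ℝ) (hYm : Measurable Y) (hJm : Measurable J)
    (hYnonneg : ∀ ω, 0 ≤ Y ω)
    (l : ℝ) (hl : 0 < l)
    (hJlaw : Measure.map J P = expMeasure l)
    (hindep : IndepFun Y J P)
    (s : ℝ) (hs0 : 0 ≤ s) (hsl : s < l) :
    ∫ ω, Real.exp (-s * min (Y ω - J ω) 0) ∂P
      = 1 + (s / (l - s)) * (P {ω | Y ω < J ω}).toReal := by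
  have hνprob : IsProbabilityMeasure (expMeasure l) := isProbabilityMeasure_expMeasure hl
  set μ := Measure.map Y P with hμ
  have hμprob : IsProbabilityMeasure μ := Measure.isProbabilityMeasure_map hYm.aemeasurable
  have hpairm : Measurable fun ω => (Y ω, J ω) := hYm.prodMk hJm
  have hjoint : Measure.map (fun ω => (Y ω, J ω)) P = μ.prod (expMeasure l) := by
    rw [hμ, ← hJlaw]
    exact (indepFun_iff_map_prod_eq_prod_map_map hYm.aemeasurable hJm.aemeasurable).mp hindep
  have hμae : ∀ᵐ y ∂μ, 0 ≤ y := by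
    rw [hμ, MeasureTheory.ae_map_iff hYm.aemeasurable (measurableSet_Ici (a := (0:ℝ)))]
    exact Filter.Eventually.of_forall hYnonneg
  have hc0 : 0 ≤ s / (l - s) := div_nonneg hs0 (by linarith)
  set c := s / (l - s) with hc
  have hFm : Measurable fun p : ℝ × ℝ => ENNReal.ofReal (rexp (-s * min (p.1 - p.2) 0)) :=
    Measurable.ennreal_ofReal (by fun_prop)
  -- expectation as lintegral over the product measure
  have h1 : ∫ ω, rexp (-s * min (Y ω - J ω) 0) ∂P
      = (∫⁻ y, ∫⁻ j, ENNReal.ofReal (rexp (-s * min (y - j) 0)) ∂(expMeasure l) ∂μ).toReal := by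
    rw [integral_eq_lintegral_of_nonneg_ae
      (Filter.Eventually.of_forall fun ω => (exp_pos _).le)
      (Measurable.aestronglyMeasurable (by fun_prop))]
    congr 1
    calc ∫⁻ ω, ENNReal.ofReal (rexp (-s * min (Y ω - J ω) 0)) ∂P
        = ∫⁻ p, ENNReal.ofReal (rexp (-s * min (p.1 - p.2) 0)) ∂(μ.prod (expMeasure l)) := by
          rw [← hjoint, lintegral_map hFm hpairm]
      _ = _ := lintegral_prod _ hFm.aemeasurable
  -- inner integral
  have h2 : ∫⁻ y, ∫⁻ j, ENNReal.ofReal (rexp (-s * min (y - j) 0)) ∂(expMeasure l) ∂μ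
      = ∫⁻ y, ENNReal.ofReal (1 + c * rexp (-(l * y))) ∂μ :=
    lintegral_congr_ae (hμae.mono fun y hy => aux_lintegral_exp hl hs0 hsl hy)
  -- integrability of the bounded integrands
  have hbd : ∀ᵐ y ∂μ, rexp (-(l * y)) ≤ 1 :=
    hμae.mono fun y hy => exp_le_one_iff.mpr (neg_nonpos.mpr (mul_nonneg hl.le hy))
  have hintE : Integrable (fun y => rexp (-(l * y))) μ := by
    refine Integrable.mono' (integrable_const 1)
      (Measurable.aestronglyMeasurable (by fun_prop)) ?_
    exact hbd.mono fun y hy => by rw [Real.norm_eq_abs, abs_of_nonneg (exp_pos _).le]; exact hy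
  have hint : Integrable (fun y => 1 + c * rexp (-(l * y))) μ :=
    (integrable_const 1).add (hintE.const_mul c)
  -- back to a Bochner integral
  have h3 : ∫⁻ y, ENNReal.ofReal (1 + c * rexp (-(l * y))) ∂μ
      = ENNReal.ofReal (∫ y, (1 + c * rexp (-(l * y))) ∂μ) :=
    (ofReal_integral_eq_lintegral_ofReal hint
      (Filter.Eventually.of_forall fun y => by positivity)).symm
  set I := ∫ y, rexp (-(l * y)) ∂μ with hI
  have hI0 : 0 ≤ I := integral_nonneg fun y => (exp_pos _).le
  have h4 : ∫ y, (1 + c * rexp (-(l * y))) ∂μ = 1 + c * I := by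
    rw [integral_add (integrable_const 1) (hintE.const_mul c), integral_const,
      integral_const_mul, probReal_univ]
    simp [hI]
  -- the probability P(Y < J)
  have h5 : P {ω | Y ω < J ω} = ENNReal.ofReal I := by
    have hset : MeasurableSet {p : ℝ × ℝ | p.1 < p.2} :=
      measurableSet_lt measurable_fst measurable_snd
    have : P {ω | Y ω < J ω}
        = Measure.map (fun ω => (Y ω, J ω)) P {p : ℝ × ℝ | p.1 < p.2} := by
      rw [Measure.map_apply hpairm hset]; rfl
    rw [this, hjoint, Measure.prod_apply hset]
    have hpre : ∀ y : ℝ, (Prod.mk y ⁻¹' {p : ℝ × ℝ | p.1 < p.2}) = Set.Ioi y := by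
      intro y; rfl
    simp_rw [hpre]
    rw [show (∫⁻ y, expMeasure l (Set.Ioi y) ∂μ)
        = ∫⁻ y, ENNReal.ofReal (rexp (-(l * y))) ∂μ from
      lintegral_congr_ae (hμae.mono fun y hy => expMeasure_Ioi hl hy)]
    exact (ofReal_integral_eq_lintegral_ofReal hintE
      (Filter.Eventually.of_forall fun y => (exp_pos _).le)).symm
  rw [h1, h2, h3, h4, h5, ENNReal.toReal_ofReal (by positivity),
    ENNReal.toReal_ofReal hI0]
end

section
/- Let W, B be nonnegative random variables and Ĵ exponentially distributed with rate ν > 0, all three mutually independent, let a > 0 and c ∈ (0,1), and write Z(y) = E[exp(−y·W)], φ_B(y) = E[exp(−y·B)], c̄ = 1 − c. Then for every real s ≥ 0, E[exp(−s·(a·W + B − max(c·B − Ĵ, 0)))] = (ν/(ν + s))·Z(a·s)·φ_B(s·c̄) + (s/(ν + s))·Z(a·s)·φ_B(s + ν·c). -/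
open MeasureTheory ProbabilityTheory Real

open MeasureTheory Set
open scoped NNReal ENNReal



lemma expPDFReal_eq (ν x : ℝ) :
    exponentialPDFReal ν x = if 0 ≤ x then ν * Real.exp (-(ν * x)) else 0 := by
  rw [exponentialPDFReal, gammaPDFReal]
  simp only [rpow_one, Real.Gamma_one, div_one, sub_self, Real.rpow_zero, mul_one]

lemma integral_expMeasure_eq {ν : ℝ} (hν : 0 < ν) (f : ℝ → ℝ) :
    ∫ x, f x ∂(expMeasure ν)
      = ∫ x in Ioi (0:ℝ), (ν * Real.exp (-(ν * x))) * f x := by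
  have h1 : expMeasure ν
      = MeasureTheory.volume.withDensity
          (fun x => ((Real.toNNReal (exponentialPDFReal ν x) : ℝ≥0) : ℝ≥0∞)) := rfl
  have hmeas : Measurable (fun x => Real.toNNReal (exponentialPDFReal ν x)) :=
    (measurable_exponentialPDFReal ν).real_toNNReal
  rw [h1, integral_withDensity_eq_integral_smul hmeas f]
  have h2 : ∀ x, (Real.toNNReal (exponentialPDFReal ν x)) • f x
      = (if 0 ≤ x then ν * Real.exp (-(ν * x)) else 0) * f x := by
    intro x
    rw [NNReal.smul_def, Real.coe_toNNReal _ (exponentialPDFReal_nonneg hν x), expPDFReal_eq]; rfl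
  simp_rw [h2]
  rw [← setIntegral_eq_integral_of_forall_compl_eq_zero
      (s := Ici (0:ℝ)) (fun x hx => by rw [if_neg (by simpa using hx), zero_mul]),
    MeasureTheory.integral_Ici_eq_integral_Ioi]
  exact setIntegral_congr_fun measurableSet_Ioi fun x hx => by rw [if_pos (le_of_lt hx)]


lemma int_Ioi_exp {t : ℝ} (d : ℝ) (ht : 0 < t) :
    ∫ x in Ioi d, Real.exp (-(t * x)) = Real.exp (-(t * d)) / t := by
  have h := MeasureTheory.integral_comp_mul_left_Ioi (fun x => Real.exp (-x)) d ht
  simp only [smul_eq_mul, integral_exp_neg_Ioi] at h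
  rw [h]; field_simp

lemma int_Ioc_exp {t : ℝ} (d : ℝ) (hd : 0 ≤ d) (ht : 0 < t) :
    ∫ x in Ioc (0:ℝ) d, Real.exp (-(t * x)) = (1 - Real.exp (-(t * d))) / t := by
  rw [← intervalIntegral.integral_of_le hd]
  have h : ∀ x : ℝ, Real.exp (-(t * x)) = Real.exp ((-t) * x) := fun x => by ring_nf
  simp_rw [h]
  rw [intervalIntegral.integral_comp_mul_left (f := Real.exp) (neg_ne_zero.mpr ht.ne')]
  simp only [mul_zero, smul_eq_mul, integral_exp]
  rw [show (-t) * d = -(t * d) by ring]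
  rw [Real.exp_zero, inv_neg, div_eq_mul_inv]; ring

set_option maxHeartbeats 1000000 in
lemma lemB {ν s c : ℝ} (hν : 0 < ν) (hs : 0 ≤ s) (hc0 : 0 < c) (hc1 : c < 1)
    {b : ℝ} (hb : 0 ≤ b) :
    ∫ j, Real.exp (-s * (b - max (c * b - max j 0) 0)) ∂(expMeasure ν)
      = ν / (ν + s) * Real.exp (-(s * (1 - c)) * b)
        + s / (ν + s) * Real.exp (-(s + ν * c) * b) := by
  have hνs : 0 < ν + s := by linarith
  have hd : 0 ≤ c * b := by positivity
  set A := Real.exp (-(s * (1 - c)) * b) with hA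
  set C := Real.exp (-(s + ν * c) * b) with hC
  have e1 : ∀ x ∈ Ioc (0:ℝ) (c*b),
      ν * Real.exp (-(ν * x)) * Real.exp (-s * (b - max (c * b - max x 0) 0))
        = (ν * A) * Real.exp (-((ν + s) * x)) := by
    intro x hx
    rw [max_eq_left hx.1.le, max_eq_left (by linarith [hx.2] : (0:ℝ) ≤ c * b - x),
      mul_assoc, ← Real.exp_add, hA, mul_assoc, ← Real.exp_add]
    congr 2
    ring
  have e2 : ∀ x ∈ Ioi (c*b),
      ν * Real.exp (-(ν * x)) * Real.exp (-s * (b - max (c * b - max x 0) 0))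
        = (ν * Real.exp (-s * b)) * Real.exp (-(ν * x)) := by
    intro x hx
    rw [max_eq_left (le_trans hd (le_of_lt hx)),
      max_eq_right (by simp only [Set.mem_Ioi] at hx; linarith : c * b - x ≤ (0:ℝ))]
    ring_nf
  have int1 : IntegrableOn
      (fun x => ν * Real.exp (-(ν * x)) * Real.exp (-s * (b - max (c * b - max x 0) 0)))
      (Ioc 0 (c*b)) := by
    rw [integrableOn_congr_fun e1 measurableSet_Ioc]
    exact (Continuous.integrableOn_Ioc (by continuity))
  have int2 : IntegrableOn
      (fun x => ν * Real.exp (-(ν * x)) * Real.exp (-s * (b - max (c * b - max x 0) 0)))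
      (Ioi (c*b)) := by
    rw [integrableOn_congr_fun e2 measurableSet_Ioi]
    simp only [← neg_mul]
    exact (exp_neg_integrableOn_Ioi (c*b) hν).const_mul _
  rw [integral_expMeasure_eq hν, ← Ioc_union_Ioi_eq_Ioi hd,
    setIntegral_union (Ioc_disjoint_Ioi le_rfl) measurableSet_Ioi int1 int2,
    setIntegral_congr_fun measurableSet_Ioc e1, setIntegral_congr_fun measurableSet_Ioi e2,
    MeasureTheory.integral_const_mul, MeasureTheory.integral_const_mul,
    int_Ioc_exp _ hd hνs, int_Ioi_exp _ hν]
  have hAE : A * Real.exp (-((ν + s) * (c * b))) = C := by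
    rw [hA, hC, ← Real.exp_add]; congr 1; ring
  have key : ν * Real.exp (-s * b) * (Real.exp (-(ν * (c * b))) / ν) = C := by
    have h2 : Real.exp (-s * b) * Real.exp (-(ν * (c * b))) = C := by
      rw [hC, ← Real.exp_add]; congr 1; ring
    rw [← h2]; field_simp
  rw [key]
  field_simp
  ring_nf
  ring_nf at hAE
  linear_combination (-ν) * hAE

set_option maxHeartbeats 800000 in
/-- For mutually independent nonnegative `W, B` and `J` exponential with
rate `ν > 0`, `a > 0` and `c ∈ (0,1)`, for every `s ≥ 0`:
`E[exp(-s·(a·W + B - max(c·B - J, 0)))]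
  = (ν/(ν+s))·Z(a·s)·φ_B(s·(1-c)) + (s/(ν+s))·Z(a·s)·φ_B(s + ν·c)`,
where `Z y = E[exp(-y·W)]` and `φ_B y = E[exp(-y·B)]`. -/
theorem lst_proportional_with_subtracting_delay
    {Ω : Type*} [MeasurableSpace Ω] (P : Measure Ω) [IsProbabilityMeasure P]
    (W B J : Ω → ℝ)
    (hWm : Measurable W) (hBm : Measurable B) (hJm : Measurable J)
    (hWnonneg : ∀ ω, 0 ≤ W ω) (hBnonneg : ∀ ω, 0 ≤ B ω)
    (ν : ℝ) (hν : 0 < ν)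
    (hJlaw : Measure.map J P = expMeasure ν)
    (hindep : iIndepFun ![W, B, J] P)
    (a : ℝ) (ha : 0 < a) (c : ℝ) (hc : c ∈ Set.Ioo (0 : ℝ) 1)
    (s : ℝ) (hs : 0 ≤ s) :
    ∫ ω, Real.exp (-s * (a * W ω + B ω - max (c * B ω - J ω) 0)) ∂P
      = (ν / (ν + s)) * (∫ ω, Real.exp (-(a * s) * W ω) ∂P)
          * (∫ ω, Real.exp (-(s * (1 - c)) * B ω) ∂P)
        + (s / (ν + s)) * (∫ ω, Real.exp (-(a * s) * W ω) ∂P)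
          * (∫ ω, Real.exp (-(s + ν * c) * B ω) ∂P) := by
  obtain ⟨hc0, hc1⟩ := hc
  have hνs : 0 < ν + s := by linarith
  -- J is a.e. nonnegative
  have hJ0 : ∀ᵐ ω ∂P, 0 ≤ J ω := by
    rw [ae_iff]
    have hset : {ω | ¬ 0 ≤ J ω} = J ⁻¹' (Iio 0) := by ext ω; simp [not_le]
    rw [hset, ← Measure.map_apply hJm measurableSet_Iio, hJlaw]
    show (MeasureTheory.volume.withDensity (gammaPDF 1 ν)) (Iio 0) = 0
    rw [withDensity_apply _ measurableSet_Iio]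
    exact lintegral_gammaPDF_of_nonpos le_rfl
  set ψ : ℝ × ℝ → ℝ :=
    fun p => Real.exp (-s * (max p.1 0 - max (c * max p.1 0 - max p.2 0) 0)) with hψ
  have hψc : Continuous ψ := by
    apply Real.continuous_exp.comp
    fun_prop
  have hψle : ∀ p : ℝ × ℝ, ‖ψ p‖ ≤ 1 := by
    intro p
    rw [Real.norm_eq_abs, abs_of_pos (Real.exp_pos _)]
    have hb' : (0:ℝ) ≤ max p.1 0 := le_max_right _ _
    have hj' : (0:ℝ) ≤ max p.2 0 := le_max_right _ _
    have h1 : max (c * max p.1 0 - max p.2 0) 0 ≤ c * max p.1 0 :=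
      max_le (by linarith) (by positivity)
    have h2 : (0:ℝ) ≤ max p.1 0 - max (c * max p.1 0 - max p.2 0) 0 := by
      nlinarith
    calc Real.exp (-s * (max p.1 0 - max (c * max p.1 0 - max p.2 0) 0))
        ≤ Real.exp 0 := Real.exp_le_exp.2 (by nlinarith)
      _ = 1 := Real.exp_zero
  set X : Ω → ℝ := fun ω => Real.exp (-(a * s) * W ω) with hX
  set Y : Ω → ℝ := fun ω => ψ (B ω, J ω) with hY
  have hmeas : ∀ i, Measurable (![W, B, J] i) := by
    intro i
    fin_cases i
    · exact hWm
    · exact hBm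
    · exact hJm
  -- independence of W and (B, J)
  have hBJW : IndepFun (fun ω => (B ω, J ω)) W P := by
    have h := hindep.indepFun_prodMk hmeas 1 2 0 (by decide) (by decide)
    simpa using h
  have hWBJ : IndepFun W (fun ω => (B ω, J ω)) P := hBJW.symm
  have hXY : IndepFun X Y P := by
    exact hWBJ.comp (by fun_prop : Measurable fun w : ℝ => Real.exp (-(a * s) * w))
      hψc.measurable
  -- independence of B and J
  have hBJ : IndepFun B J P := by
    have h := hindep.indepFun (i := 1) (j := 2) (by decide)
    simpa using h
  have hmap : Measure.map (fun ω => (B ω, J ω)) P = (P.map B).prod (P.map J) :=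
    (indepFun_iff_map_prod_eq_prod_map_map hBm.aemeasurable hJm.aemeasurable).1 hBJ
  haveI : IsProbabilityMeasure (P.map B) := Measure.isProbabilityMeasure_map hBm.aemeasurable
  haveI : IsProbabilityMeasure (P.map J) := Measure.isProbabilityMeasure_map hJm.aemeasurable
  -- step 1: rewrite integrand as X * Y
  have step1 : ∫ ω, Real.exp (-s * (a * W ω + B ω - max (c * B ω - J ω) 0)) ∂P
      = ∫ ω, X ω * Y ω ∂P := by
    refine integral_congr_ae ?_
    filter_upwards [hJ0] with ω hω
    rw [hX, hY, hψ]
    simp only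
    rw [max_eq_left (hBnonneg ω), max_eq_left hω, ← Real.exp_add]
    congr 1
    ring
  have hXm : AEStronglyMeasurable X P :=
    (Real.measurable_exp.comp (hWm.const_mul _)).aestronglyMeasurable
  have hYm : AEStronglyMeasurable Y P :=
    (hψc.measurable.comp (hBm.prodMk hJm)).aestronglyMeasurable
  have step2 : ∫ ω, X ω * Y ω ∂P = (∫ ω, X ω ∂P) * ∫ ω, Y ω ∂P :=
    hXY.integral_fun_mul_eq_mul_integral hXm hYm
  -- step 3: compute ∫ Y
  have hψint : Integrable ψ ((P.map B).prod (P.map J)) :=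
    Integrable.mono' (integrable_const 1) hψc.aestronglyMeasurable (ae_of_all _ hψle)
  have step3 : ∫ ω, Y ω ∂P = ∫ b, ∫ j, ψ (b, j) ∂(P.map J) ∂(P.map B) := by
    rw [hY]
    calc ∫ ω, ψ (B ω, J ω) ∂P
        = ∫ p, ψ p ∂(Measure.map (fun ω => (B ω, J ω)) P) :=
          (integral_map (hBm.prodMk hJm).aemeasurable hψc.aestronglyMeasurable).symm
      _ = ∫ p, ψ p ∂((P.map B).prod (P.map J)) := by rw [hmap]
      _ = ∫ b, ∫ j, ψ (b, j) ∂(P.map J) ∂(P.map B) := integral_prod ψ hψint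
  have step4 : ∀ b : ℝ, ∫ j, ψ (b, j) ∂(P.map J)
      = ν / (ν + s) * Real.exp (-(s * (1 - c)) * max b 0)
        + s / (ν + s) * Real.exp (-(s + ν * c) * max b 0) := by
    intro b
    rw [hJlaw]
    simp only [hψ]
    exact lemB hν hs hc0 hc1 (le_max_right b 0)
  have step5 : ∫ b, ∫ j, ψ (b, j) ∂(P.map J) ∂(P.map B)
      = ν / (ν + s) * (∫ ω, Real.exp (-(s * (1 - c)) * B ω) ∂P)
        + s / (ν + s) * (∫ ω, Real.exp (-(s + ν * c) * B ω) ∂P) := by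
    simp_rw [step4]
    have hG : ∀ t : ℝ, 0 ≤ t →
        ∫ b, Real.exp (-t * max b 0) ∂(P.map B) = ∫ ω, Real.exp (-t * B ω) ∂P := by
      intro t ht
      rw [integral_map hBm.aemeasurable
        (((measurable_id'.max measurable_const).const_mul (-t)).exp).aestronglyMeasurable]
      refine integral_congr_ae (ae_of_all _ fun ω => ?_)
      simp [max_eq_left (hBnonneg ω)]
    have hint : ∀ t : ℝ, 0 ≤ t →
        Integrable (fun b => Real.exp (-t * max b 0)) (P.map B) := by
      intro t ht
      refine Integrable.mono' (integrable_const 1)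
        (((measurable_id'.max measurable_const).const_mul (-t)).exp).aestronglyMeasurable
        (ae_of_all _ fun b => ?_)
      rw [Real.norm_eq_abs, abs_of_pos (Real.exp_pos _)]
      calc Real.exp (-t * max b 0) ≤ Real.exp 0 :=
            Real.exp_le_exp.2 (by nlinarith [le_max_right b (0:ℝ)])
        _ = 1 := Real.exp_zero
    have ht1 : (0:ℝ) ≤ s * (1 - c) := by nlinarith
    have ht2 : (0:ℝ) ≤ s + ν * c := by nlinarith
    rw [integral_add (((hint _ ht1).const_mul _)) ((hint _ ht2).const_mul _),
      MeasureTheory.integral_const_mul, MeasureTheory.integral_const_mul, hG _ ht1, hG _ ht2]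
  rw [step1, step2, step3, step5]
  ring
end

section
/- Let a ∈ (0,1), s₀ ∈ ℂ, and let Z, H, L : ℂ → ℂ be functions such that Z(aⁿ·s₀) = H(aⁿ·s₀)·Z(a^{n+1}·s₀) + L(aⁿ·s₀) for every n ≥ 0, Z is continuous at 0, and Z(0) = 1. If the partial products P_n := ∏_{j=0}^{n−1} H(a^j·s₀) converge to a limit P as n → ∞, then the series Σ_{n=0}^∞ L(aⁿ·s₀)·P_n converges and Z(s₀) = Σ_{n=0}^∞ L(aⁿ·s₀)·P_n + P. -/
open Filter Finset

/-- If `Z(aⁿs₀) = H(aⁿs₀)·Z(aⁿ⁺¹s₀) + L(aⁿs₀)` for all `n`, `Z` is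
continuous at `0` with `Z(0) = 1`, and the partial products `Pₙ = ∏_{j<n} H(aʲs₀)`
converge to `P`, then the series `Σₙ L(aⁿs₀)·Pₙ` converges and
`Z(s₀) = Σₙ L(aⁿs₀)·Pₙ + P`, i.e. the partial sums tend to `Z(s₀) - P`. -/
theorem iterated_functional_equation_sum
    (a : ℝ) (ha : a ∈ Set.Ioo (0 : ℝ) 1) (s₀ P : ℂ) (Z H L : ℂ → ℂ)
    (hrec : ∀ n : ℕ,
      Z ((a : ℂ) ^ n * s₀) = H ((a : ℂ) ^ n * s₀) * Z ((a : ℂ) ^ (n + 1) * s₀)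
        + L ((a : ℂ) ^ n * s₀))
    (hcont : ContinuousAt Z 0) (hZ0 : Z 0 = 1)
    (hP : Tendsto (fun n => ∏ j ∈ range n, H ((a : ℂ) ^ j * s₀)) atTop (nhds P)) :
    Tendsto
      (fun N => ∑ n ∈ range N, L ((a : ℂ) ^ n * s₀) * ∏ j ∈ range n, H ((a : ℂ) ^ j * s₀))
      atTop (nhds (Z s₀ - P)) := by
  have key : ∀ N : ℕ,
      (∑ n ∈ range N, L ((a : ℂ) ^ n * s₀) * ∏ j ∈ range n, H ((a : ℂ) ^ j * s₀))
        = Z s₀ - (∏ j ∈ range N, H ((a : ℂ) ^ j * s₀)) * Z ((a : ℂ) ^ N * s₀) := by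
    intro N
    induction N with
    | zero => simp
    | succ N ih =>
      rw [Finset.sum_range_succ, Finset.prod_range_succ, ih, hrec N]
      ring
  have h1 : Tendsto (fun N : ℕ => (a : ℂ) ^ N * s₀) atTop (nhds 0) := by
    have : Tendsto (fun N : ℕ => (a : ℂ) ^ N) atTop (nhds 0) := by
      apply tendsto_pow_atTop_nhds_zero_of_norm_lt_one
      rw [Complex.norm_real, Real.norm_eq_abs, abs_of_pos ha.1]
      exact ha.2
    simpa using this.mul_const s₀
  have h2 : Tendsto (fun N : ℕ => Z ((a : ℂ) ^ N * s₀)) atTop (nhds 1) := by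
    rw [← hZ0]
    exact hcont.tendsto.comp h1
  have h3 : Tendsto (fun N : ℕ =>
      Z s₀ - (∏ j ∈ range N, H ((a : ℂ) ^ j * s₀)) * Z ((a : ℂ) ^ N * s₀))
      atTop (nhds (Z s₀ - P)) := by
    have := (hP.mul h2).const_sub (Z s₀)
    simpa using this
  simpa only [key] using h3
end

section
/- Let a₀, a₁ ∈ (0,1), s₀ ∈ ℂ, and let Z, h₀, h₁, L : ℂ → ℂ satisfy Z(u) = h₀(u)·Z(a₀·u) + h₁(u)·Z(a₁·u) + L(u) for every u in the set {a₀^k·a₁^m·s₀ : k, m ≥ 0}. Define K_{k,m}(s₀) for integers k, m ≥ 0 by K_{0,0}(s₀) = 1, K_{k,m}(s₀) = 0 if k < 0 or m < 0, and K_{k,m}(s₀) = K_{k−1,m}(s₀)·h₀(a₀^{k−1}·a₁^m·s₀) + K_{k,m−1}(s₀)·h₁(a₀^k·a₁^{m−1}·s₀) for (k,m) ≠ (0,0). Then for every integer n ≥ 0: Z(s₀) = Σ_{k=0}^n K_{k,n−k}(s₀)·Z(a₀^k·a₁^{n−k}·s₀) + Σ_{i=0}^{n−1} Σ_{k=0}^i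 K_{k,i−k}(s₀)·L(a₀^k·a₁^{i−k}·s₀). -/
open Finset

/-- If `Z(u) = h₀(u)·Z(a₀u) + h₁(u)·Z(a₁u) + L(u)` on the orbit
`{a₀ᵏa₁ᵐs₀}`, and `K k m` are the lattice-path weights defined by `K 0 0 = 1`,
`K k m = 0` for negative indices, and
`K k m = K (k-1) m · h₀(a₀^(k-1)a₁^m s₀) + K k (m-1) · h₁(a₀^k a₁^(m-1) s₀)`
for `(k,m) ≠ (0,0)`, then for every `n ≥ 0`:
`Z(s₀) = Σ_{k=0}^n K k (n-k)·Z(a₀ᵏa₁^{n-k}s₀)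
  + Σ_{i=0}^{n-1} Σ_{k=0}^i K k (i-k)·L(a₀ᵏa₁^{i-k}s₀)`. -/
theorem two_scale_functional_equation_iteration
    (a₀ a₁ : ℝ) (ha₀ : a₀ ∈ Set.Ioo (0 : ℝ) 1) (ha₁ : a₁ ∈ Set.Ioo (0 : ℝ) 1)
    (s₀ : ℂ) (Z h₀ h₁ L : ℂ → ℂ)
    (hrec : ∀ k m : ℕ,
      Z ((a₀ : ℂ) ^ k * (a₁ : ℂ) ^ m * s₀)
        = h₀ ((a₀ : ℂ) ^ k * (a₁ : ℂ) ^ m * s₀) * Z ((a₀ : ℂ) ^ (k + 1) * (a₁ : ℂ) ^ m * s₀)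
          + h₁ ((a₀ : ℂ) ^ k * (a₁ : ℂ) ^ m * s₀) * Z ((a₀ : ℂ) ^ k * (a₁ : ℂ) ^ (m + 1) * s₀)
          + L ((a₀ : ℂ) ^ k * (a₁ : ℂ) ^ m * s₀))
    (Kw : ℕ → ℕ → ℂ) (hK00 : Kw 0 0 = 1)
    (hKrec : ∀ k m : ℕ, (k, m) ≠ (0, 0) →
      Kw k m
        = (if k = 0 then 0
            else Kw (k - 1) m * h₀ ((a₀ : ℂ) ^ (k - 1) * (a₁ : ℂ) ^ m * s₀))
          + (if m = 0 then 0
            else Kw k (m - 1) * h₁ ((a₀ : ℂ) ^ k * (a₁ : ℂ) ^ (m - 1) * s₀))) :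
    ∀ n : ℕ,
      Z s₀ = (∑ k ∈ range (n + 1), Kw k (n - k) * Z ((a₀ : ℂ) ^ k * (a₁ : ℂ) ^ (n - k) * s₀))
        + ∑ i ∈ range n, ∑ k ∈ range (i + 1),
            Kw k (i - k) * L ((a₀ : ℂ) ^ k * (a₁ : ℂ) ^ (i - k) * s₀) := by
  have key : ∀ n : ℕ,
      (∑ k ∈ range (n + 1), Kw k (n - k) * Z ((a₀ : ℂ) ^ k * (a₁ : ℂ) ^ (n - k) * s₀))
      = (∑ k ∈ range (n + 2),
            Kw k (n + 1 - k) * Z ((a₀ : ℂ) ^ k * (a₁ : ℂ) ^ (n + 1 - k) * s₀))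
        + ∑ k ∈ range (n + 1), Kw k (n - k) * L ((a₀ : ℂ) ^ k * (a₁ : ℂ) ^ (n - k) * s₀) := by
    intro n
    have hA : (∑ k ∈ range (n + 2),
          Kw k (n + 1 - k) * Z ((a₀ : ℂ) ^ k * (a₁ : ℂ) ^ (n + 1 - k) * s₀))
        = ∑ k ∈ range (n + 1),
            (Kw k (n - k) * h₀ ((a₀ : ℂ) ^ k * (a₁ : ℂ) ^ (n - k) * s₀)
                * Z ((a₀ : ℂ) ^ (k + 1) * (a₁ : ℂ) ^ (n - k) * s₀)
              + Kw k (n - k) * h₁ ((a₀ : ℂ) ^ k * (a₁ : ℂ) ^ (n - k) * s₀)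
                * Z ((a₀ : ℂ) ^ k * (a₁ : ℂ) ^ ((n - k) + 1) * s₀)) := by
      have hsplit : ∀ k ∈ range (n + 2),
          Kw k (n + 1 - k) * Z ((a₀ : ℂ) ^ k * (a₁ : ℂ) ^ (n + 1 - k) * s₀)
          = (if k = 0 then 0
              else Kw (k - 1) (n + 1 - k)
                * h₀ ((a₀ : ℂ) ^ (k - 1) * (a₁ : ℂ) ^ (n + 1 - k) * s₀))
              * Z ((a₀ : ℂ) ^ k * (a₁ : ℂ) ^ (n + 1 - k) * s₀)
            + (if n + 1 - k = 0 then 0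
              else Kw k (n + 1 - k - 1)
                * h₁ ((a₀ : ℂ) ^ k * (a₁ : ℂ) ^ (n + 1 - k - 1) * s₀))
              * Z ((a₀ : ℂ) ^ k * (a₁ : ℂ) ^ (n + 1 - k) * s₀) := by
        intro k hk
        rw [hKrec k (n + 1 - k) (by
          simp only [ne_eq, Prod.mk.injEq, not_and]
          intro h0; omega), add_mul]
      rw [Finset.sum_congr rfl hsplit, Finset.sum_add_distrib]
      have h1 : (∑ k ∈ range (n + 2),
            (if k = 0 then 0
              else Kw (k - 1) (n + 1 - k)
                * h₀ ((a₀ : ℂ) ^ (k - 1) * (a₁ : ℂ) ^ (n + 1 - k) * s₀))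
              * Z ((a₀ : ℂ) ^ k * (a₁ : ℂ) ^ (n + 1 - k) * s₀))
          = ∑ k ∈ range (n + 1),
              Kw k (n - k) * h₀ ((a₀ : ℂ) ^ k * (a₁ : ℂ) ^ (n - k) * s₀)
                * Z ((a₀ : ℂ) ^ (k + 1) * (a₁ : ℂ) ^ (n - k) * s₀) := by
        rw [Finset.sum_range_succ']
        simp [Nat.succ_sub_succ]
      have h2 : (∑ k ∈ range (n + 2),
            (if n + 1 - k = 0 then 0
              else Kw k (n + 1 - k - 1)
                * h₁ ((a₀ : ℂ) ^ k * (a₁ : ℂ) ^ (n + 1 - k - 1) * s₀))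
              * Z ((a₀ : ℂ) ^ k * (a₁ : ℂ) ^ (n + 1 - k) * s₀))
          = ∑ k ∈ range (n + 1),
              Kw k (n - k) * h₁ ((a₀ : ℂ) ^ k * (a₁ : ℂ) ^ (n - k) * s₀)
                * Z ((a₀ : ℂ) ^ k * (a₁ : ℂ) ^ ((n - k) + 1) * s₀) := by
        rw [Finset.sum_range_succ]
        simp only [Nat.sub_self, if_true, eq_self_iff_true, zero_mul, add_zero, ite_true]
        refine Finset.sum_congr rfl ?_
        intro k hk
        rw [Finset.mem_range] at hk
        have hk' : k ≤ n := Nat.lt_succ_iff.mp hk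
        rw [if_neg (by omega)]
        have e1 : n + 1 - k - 1 = n - k := by omega
        have e2 : n + 1 - k = (n - k) + 1 := by omega
        rw [e1, e2]
      rw [h1, h2, ← Finset.sum_add_distrib]
    rw [hA, ← Finset.sum_add_distrib]
    refine Finset.sum_congr rfl ?_
    intro k hk
    rw [hrec k (n - k)]
    ring
  intro n
  induction n with
  | zero => simp [hK00]
  | succ n ih =>
    rw [ih, key n, Finset.sum_range_succ (n := n)
      (f := fun i => ∑ k ∈ range (i + 1),
        Kw k (i - k) * L ((a₀ : ℂ) ^ k * (a₁ : ℂ) ^ (i - k) * s₀))]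
    ring
end

section
/- Let a₀, a₁ ∈ (0,1), s₀ ∈ ℂ, r ∈ [0,1), and let Z, h₀, h₁, L : ℂ → ℂ satisfy Z(u) = r·(h₀(u)·Z(a₀·u) + h₁(u)·Z(a₁·u)) + L(u) for every u ∈ {a₀^k·a₁^m·s₀ : k, m ≥ 0}. Assume |h₀(u)| + |h₁(u)| ≤ 1 for every u in this set and that Z is bounded on this set. Define K_{k,m}(s₀) by K_{0,0}(s₀) = 1, K_{k,m}(s₀) = 0 for k < 0 or m < 0, and K_{k,m}(s₀) = K_{k−1,m}(s₀)·h₀(a₀^{k−1}·a₁^m·s₀) + K_{k,m−1}(s₀)·h₁(a₀^k·a₁^{m−1}·s₀) for (k,m) ≠ (0,0). Then (i) Σ_{k=0}^n |K_{k,n−k}(s₀)| ≤ 1 for every n ≥ 0, and (ii) the series Σ_{i=0}^∞ r^i · Σ_{k=0}^i K_{k,i−k}(s₀)·L(a₀^k·a₁^{i−k}·s₀) converges absolutely and equals Z(s₀). -/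
open Finset

private lemma shift_sum_A {M : Type*} [AddCommMonoid M] (n : ℕ) (G : ℕ → ℕ → M) :
    ∑ k ∈ range (n + 2), (if k = 0 then 0 else G (k - 1) (n + 1 - k))
      = ∑ k ∈ range (n + 1), G k (n - k) := by
  rw [Finset.sum_range_succ', if_pos rfl, add_zero]
  apply Finset.sum_congr rfl
  intro k hk
  rw [if_neg (Nat.succ_ne_zero k)]
  simp only [Nat.add_sub_cancel]
  congr 1
  omega

private lemma shift_sum_B {M : Type*} [AddCommMonoid M] (n : ℕ) (G : ℕ → ℕ → M) :
    ∑ k ∈ range (n + 2), (if n + 1 - k = 0 then 0 else G k (n + 1 - k - 1))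
      = ∑ k ∈ range (n + 1), G k (n - k) := by
  rw [Finset.sum_range_succ]
  rw [if_pos (by omega), add_zero]
  apply Finset.sum_congr rfl
  intro k hk
  rw [mem_range] at hk
  rw [if_neg (by omega)]
  congr 1
  omega


/-- If `Z(u) = r·(h₀(u)·Z(a₀u) + h₁(u)·Z(a₁u)) + L(u)` on the orbit
`{a₀ᵏa₁ᵐs₀}`, with `|h₀(u)| + |h₁(u)| ≤ 1` on this set, `Z` bounded on this set,
`0 ≤ r < 1`, and `K k m` the lattice-path weights, then
(i) `Σ_{k=0}^n |K k (n-k)| ≤ 1` for every `n`, and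
(ii) the series `Σᵢ rⁱ·Σ_{k=0}^i K k (i-k)·L(a₀ᵏa₁^{i-k}s₀)` converges absolutely
with sum `Z(s₀)`. -/
theorem two_scale_functional_equation_solution
    (a₀ a₁ : ℝ) (ha₀ : a₀ ∈ Set.Ioo (0 : ℝ) 1) (ha₁ : a₁ ∈ Set.Ioo (0 : ℝ) 1)
    (s₀ : ℂ) (r : ℝ) (hr : r ∈ Set.Ico (0 : ℝ) 1) (Z h₀ h₁ L : ℂ → ℂ)
    (hrec : ∀ k m : ℕ,
      Z ((a₀ : ℂ) ^ k * (a₁ : ℂ) ^ m * s₀)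
        = (r : ℂ) * (h₀ ((a₀ : ℂ) ^ k * (a₁ : ℂ) ^ m * s₀)
              * Z ((a₀ : ℂ) ^ (k + 1) * (a₁ : ℂ) ^ m * s₀)
            + h₁ ((a₀ : ℂ) ^ k * (a₁ : ℂ) ^ m * s₀)
              * Z ((a₀ : ℂ) ^ k * (a₁ : ℂ) ^ (m + 1) * s₀))
          + L ((a₀ : ℂ) ^ k * (a₁ : ℂ) ^ m * s₀))
    (hh : ∀ k m : ℕ,
      ‖h₀ ((a₀ : ℂ) ^ k * (a₁ : ℂ) ^ m * s₀)‖ + ‖h₁ ((a₀ : ℂ) ^ k * (a₁ : ℂ) ^ m * s₀)‖ ≤ 1)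
    (hZbd : ∃ C, ∀ k m : ℕ, ‖Z ((a₀ : ℂ) ^ k * (a₁ : ℂ) ^ m * s₀)‖ ≤ C)
    (Kw : ℕ → ℕ → ℂ) (hK00 : Kw 0 0 = 1)
    (hKrec : ∀ k m : ℕ, (k, m) ≠ (0, 0) →
      Kw k m
        = (if k = 0 then 0
            else Kw (k - 1) m * h₀ ((a₀ : ℂ) ^ (k - 1) * (a₁ : ℂ) ^ m * s₀))
          + (if m = 0 then 0
            else Kw k (m - 1) * h₁ ((a₀ : ℂ) ^ k * (a₁ : ℂ) ^ (m - 1) * s₀))) :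
    (∀ n : ℕ, ∑ k ∈ range (n + 1), ‖Kw k (n - k)‖ ≤ 1) ∧
      Summable (fun i : ℕ => ‖(r : ℂ) ^ i * ∑ k ∈ range (i + 1),
          Kw k (i - k) * L ((a₀ : ℂ) ^ k * (a₁ : ℂ) ^ (i - k) * s₀)‖) ∧
      HasSum (fun i : ℕ => (r : ℂ) ^ i * ∑ k ∈ range (i + 1),
          Kw k (i - k) * L ((a₀ : ℂ) ^ k * (a₁ : ℂ) ^ (i - k) * s₀)) (Z s₀) := by
  -- decomposition of Kw on the diagonal n+1
  have hdec : ∀ n : ℕ, ∀ k ∈ range (n + 2),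
      Kw k (n + 1 - k)
        = (if k = 0 then 0
            else Kw (k - 1) (n + 1 - k)
              * h₀ ((a₀ : ℂ) ^ (k - 1) * (a₁ : ℂ) ^ (n + 1 - k) * s₀))
          + (if n + 1 - k = 0 then 0
            else Kw k (n + 1 - k - 1)
              * h₁ ((a₀ : ℂ) ^ k * (a₁ : ℂ) ^ (n + 1 - k - 1) * s₀)) := by
    intro n k hk
    rw [mem_range] at hk
    exact hKrec k (n + 1 - k) (by
      simp only [ne_eq, Prod.mk.injEq, not_and]
      intro h1 h2
      omega)
  -- Part (i)
  have part1 : ∀ n : ℕ, ∑ k ∈ range (n + 1), ‖Kw k (n - k)‖ ≤ 1 := by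
    intro n
    induction n with
    | zero => simp [hK00]
    | succ n ih =>
      calc ∑ k ∈ range (n + 1 + 1), ‖Kw k (n + 1 - k)‖
          ≤ ∑ k ∈ range (n + 2),
              ((if k = 0 then 0
                else ‖Kw (k - 1) (n + 1 - k)
                  * h₀ ((a₀ : ℂ) ^ (k - 1) * (a₁ : ℂ) ^ (n + 1 - k) * s₀)‖)
              + (if n + 1 - k = 0 then 0
                else ‖Kw k (n + 1 - k - 1)
                  * h₁ ((a₀ : ℂ) ^ k * (a₁ : ℂ) ^ (n + 1 - k - 1) * s₀)‖)) := by
            apply Finset.sum_le_sum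
            intro k hk
            rw [hdec n k hk]
            refine (norm_add_le _ _).trans ?_
            gcongr <;> [skip; skip] <;>
              · split_ifs <;> simp
        _ = (∑ k ∈ range (n + 2),
              (if k = 0 then 0
                else ‖Kw (k - 1) (n + 1 - k)
                  * h₀ ((a₀ : ℂ) ^ (k - 1) * (a₁ : ℂ) ^ (n + 1 - k) * s₀)‖))
            + (∑ k ∈ range (n + 2),
              (if n + 1 - k = 0 then 0
                else ‖Kw k (n + 1 - k - 1)
                  * h₁ ((a₀ : ℂ) ^ k * (a₁ : ℂ) ^ (n + 1 - k - 1) * s₀)‖)) :=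
            Finset.sum_add_distrib
        _ = (∑ k ∈ range (n + 1),
              ‖Kw k (n - k) * h₀ ((a₀ : ℂ) ^ k * (a₁ : ℂ) ^ (n - k) * s₀)‖)
            + (∑ k ∈ range (n + 1),
              ‖Kw k (n - k) * h₁ ((a₀ : ℂ) ^ k * (a₁ : ℂ) ^ (n - k) * s₀)‖) := by
            rw [shift_sum_A n (fun k m => ‖Kw k m * h₀ ((a₀ : ℂ) ^ k * (a₁ : ℂ) ^ m * s₀)‖),
              shift_sum_B n (fun k m => ‖Kw k m * h₁ ((a₀ : ℂ) ^ k * (a₁ : ℂ) ^ m * s₀)‖)]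
        _ = ∑ k ∈ range (n + 1), ‖Kw k (n - k)‖
              * (‖h₀ ((a₀ : ℂ) ^ k * (a₁ : ℂ) ^ (n - k) * s₀)‖
                + ‖h₁ ((a₀ : ℂ) ^ k * (a₁ : ℂ) ^ (n - k) * s₀)‖) := by
            rw [← Finset.sum_add_distrib]
            apply Finset.sum_congr rfl
            intro k _
            rw [norm_mul, norm_mul, mul_add]
        _ ≤ ∑ k ∈ range (n + 1), ‖Kw k (n - k)‖ * 1 := by
            apply Finset.sum_le_sum
            intro k _
            exact mul_le_mul_of_nonneg_left (hh k (n - k)) (norm_nonneg _)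
        _ ≤ 1 := by simpa using ih
  -- step lemma for diagonal sums
  have hdiag : ∀ (n : ℕ) (F : ℕ → ℕ → ℂ),
      ∑ k ∈ range (n + 2), Kw k (n + 1 - k) * F k (n + 1 - k)
        = ∑ k ∈ range (n + 1), Kw k (n - k)
            * (h₀ ((a₀ : ℂ) ^ k * (a₁ : ℂ) ^ (n - k) * s₀) * F (k + 1) (n - k)
              + h₁ ((a₀ : ℂ) ^ k * (a₁ : ℂ) ^ (n - k) * s₀) * F k (n - k + 1)) := by
    intro n F
    have e1 : ∑ k ∈ range (n + 2), Kw k (n + 1 - k) * F k (n + 1 - k)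
        = (∑ k ∈ range (n + 2),
            (if k = 0 then 0
              else Kw (k - 1) (n + 1 - k)
                * h₀ ((a₀ : ℂ) ^ (k - 1) * (a₁ : ℂ) ^ (n + 1 - k) * s₀)
                * F ((k - 1) + 1) (n + 1 - k)))
          + (∑ k ∈ range (n + 2),
            (if n + 1 - k = 0 then 0
              else Kw k (n + 1 - k - 1)
                * h₁ ((a₀ : ℂ) ^ k * (a₁ : ℂ) ^ (n + 1 - k - 1) * s₀)
                * F k ((n + 1 - k - 1) + 1))) := by
      rw [← Finset.sum_add_distrib]
      apply Finset.sum_congr rfl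
      intro k hk
      rw [mem_range] at hk
      rw [hdec n k (mem_range.mpr hk), add_mul]
      congr 1
      · split_ifs with h
        · simp
        · have hk1 : k - 1 + 1 = k := by omega
          rw [hk1]
      · split_ifs with h
        · simp
        · have hm1 : n + 1 - k - 1 + 1 = n + 1 - k := by omega
          rw [hm1]
    rw [e1,
      shift_sum_A n (fun k m => Kw k m
        * h₀ ((a₀ : ℂ) ^ k * (a₁ : ℂ) ^ m * s₀) * F (k + 1) m),
      shift_sum_B n (fun k m => Kw k m
        * h₁ ((a₀ : ℂ) ^ k * (a₁ : ℂ) ^ m * s₀) * F k (m + 1)),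
      ← Finset.sum_add_distrib]
    apply Finset.sum_congr rfl
    intro k _
    ring
  -- abbreviations
  set T : ℕ → ℂ := fun n => ∑ k ∈ range (n + 1),
      Kw k (n - k) * Z ((a₀ : ℂ) ^ k * (a₁ : ℂ) ^ (n - k) * s₀) with hT
  set LS : ℕ → ℂ := fun n => ∑ k ∈ range (n + 1),
      Kw k (n - k) * L ((a₀ : ℂ) ^ k * (a₁ : ℂ) ^ (n - k) * s₀) with hLS
  have hTstep : ∀ n : ℕ, T n = (r : ℂ) * T (n + 1) + LS n := by
    intro n
    have h5 : T (n + 1) = ∑ k ∈ range (n + 1), Kw k (n - k)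
        * (h₀ ((a₀ : ℂ) ^ k * (a₁ : ℂ) ^ (n - k) * s₀)
            * Z ((a₀ : ℂ) ^ (k + 1) * (a₁ : ℂ) ^ (n - k) * s₀)
          + h₁ ((a₀ : ℂ) ^ k * (a₁ : ℂ) ^ (n - k) * s₀)
            * Z ((a₀ : ℂ) ^ k * (a₁ : ℂ) ^ (n - k + 1) * s₀)) :=
      hdiag n (fun k m => Z ((a₀ : ℂ) ^ k * (a₁ : ℂ) ^ m * s₀))
    calc T n = ∑ k ∈ range (n + 1),
          Kw k (n - k) * ((r : ℂ)
            * (h₀ ((a₀ : ℂ) ^ k * (a₁ : ℂ) ^ (n - k) * s₀)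
                * Z ((a₀ : ℂ) ^ (k + 1) * (a₁ : ℂ) ^ (n - k) * s₀)
              + h₁ ((a₀ : ℂ) ^ k * (a₁ : ℂ) ^ (n - k) * s₀)
                * Z ((a₀ : ℂ) ^ k * (a₁ : ℂ) ^ (n - k + 1) * s₀))
            + L ((a₀ : ℂ) ^ k * (a₁ : ℂ) ^ (n - k) * s₀)) := by
          apply Finset.sum_congr rfl
          intro k _
          rw [← hrec k (n - k)]
      _ = (r : ℂ) * (∑ k ∈ range (n + 1), Kw k (n - k)
            * (h₀ ((a₀ : ℂ) ^ k * (a₁ : ℂ) ^ (n - k) * s₀)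
                * Z ((a₀ : ℂ) ^ (k + 1) * (a₁ : ℂ) ^ (n - k) * s₀)
              + h₁ ((a₀ : ℂ) ^ k * (a₁ : ℂ) ^ (n - k) * s₀)
                * Z ((a₀ : ℂ) ^ k * (a₁ : ℂ) ^ (n - k + 1) * s₀)))
          + LS n := by
        rw [Finset.mul_sum, hLS, ← Finset.sum_add_distrib]
        apply Finset.sum_congr rfl
        intro k _
        ring
      _ = (r : ℂ) * T (n + 1) + LS n := by rw [h5]
  have htel : ∀ N : ℕ, Z s₀ = (∑ i ∈ range N, (r : ℂ) ^ i * LS i) + (r : ℂ) ^ N * T N := by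
    intro N
    induction N with
    | zero =>
      simp only [range_zero, Finset.sum_empty, pow_zero, one_mul, zero_add]
      simp [hT, hK00]
    | succ N ih =>
      rw [ih, hTstep N, Finset.sum_range_succ]
      ring
  obtain ⟨C, hC⟩ := hZbd
  have hC0 : 0 ≤ C := le_trans (norm_nonneg _) (hC 0 0)
  have hTbd : ∀ n : ℕ, ‖T n‖ ≤ C := by
    intro n
    calc ‖T n‖ ≤ ∑ k ∈ range (n + 1),
          ‖Kw k (n - k) * Z ((a₀ : ℂ) ^ k * (a₁ : ℂ) ^ (n - k) * s₀)‖ :=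
        norm_sum_le _ _
      _ ≤ ∑ k ∈ range (n + 1), ‖Kw k (n - k)‖ * C := by
        apply Finset.sum_le_sum
        intro k _
        rw [norm_mul]
        exact mul_le_mul_of_nonneg_left (hC k (n - k)) (norm_nonneg _)
      _ = (∑ k ∈ range (n + 1), ‖Kw k (n - k)‖) * C := by rw [← Finset.sum_mul]
      _ ≤ 1 * C := mul_le_mul_of_nonneg_right (part1 n) hC0
      _ = C := one_mul C
  have hrc : ‖(r : ℂ)‖ = r := by
    simp [Complex.norm_real, Real.norm_eq_abs, abs_of_nonneg hr.1]
  have hLbd : ∀ k m : ℕ, ‖L ((a₀ : ℂ) ^ k * (a₁ : ℂ) ^ m * s₀)‖ ≤ 2 * C := by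
    intro k m
    have h1 : L ((a₀ : ℂ) ^ k * (a₁ : ℂ) ^ m * s₀)
        = Z ((a₀ : ℂ) ^ k * (a₁ : ℂ) ^ m * s₀)
          - (r : ℂ) * (h₀ ((a₀ : ℂ) ^ k * (a₁ : ℂ) ^ m * s₀)
              * Z ((a₀ : ℂ) ^ (k + 1) * (a₁ : ℂ) ^ m * s₀)
            + h₁ ((a₀ : ℂ) ^ k * (a₁ : ℂ) ^ m * s₀)
              * Z ((a₀ : ℂ) ^ k * (a₁ : ℂ) ^ (m + 1) * s₀)) := by
      rw [hrec k m]; ring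
    rw [h1]
    have hb : ‖(r : ℂ) * (h₀ ((a₀ : ℂ) ^ k * (a₁ : ℂ) ^ m * s₀)
          * Z ((a₀ : ℂ) ^ (k + 1) * (a₁ : ℂ) ^ m * s₀)
        + h₁ ((a₀ : ℂ) ^ k * (a₁ : ℂ) ^ m * s₀)
          * Z ((a₀ : ℂ) ^ k * (a₁ : ℂ) ^ (m + 1) * s₀))‖ ≤ C := by
      rw [norm_mul, hrc]
      have h2 : ‖h₀ ((a₀ : ℂ) ^ k * (a₁ : ℂ) ^ m * s₀)
          * Z ((a₀ : ℂ) ^ (k + 1) * (a₁ : ℂ) ^ m * s₀)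
        + h₁ ((a₀ : ℂ) ^ k * (a₁ : ℂ) ^ m * s₀)
          * Z ((a₀ : ℂ) ^ k * (a₁ : ℂ) ^ (m + 1) * s₀)‖ ≤ C := by
        refine (norm_add_le _ _).trans ?_
        rw [norm_mul, norm_mul]
        have := hh k m
        have h3 := hC (k + 1) m
        have h4 := hC k (m + 1)
        nlinarith [norm_nonneg (h₀ ((a₀ : ℂ) ^ k * (a₁ : ℂ) ^ m * s₀)),
          norm_nonneg (h₁ ((a₀ : ℂ) ^ k * (a₁ : ℂ) ^ m * s₀)),
          norm_nonneg (Z ((a₀ : ℂ) ^ (k + 1) * (a₁ : ℂ) ^ m * s₀)),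
          norm_nonneg (Z ((a₀ : ℂ) ^ k * (a₁ : ℂ) ^ (m + 1) * s₀))]
      nlinarith [norm_nonneg (h₀ ((a₀ : ℂ) ^ k * (a₁ : ℂ) ^ m * s₀)
          * Z ((a₀ : ℂ) ^ (k + 1) * (a₁ : ℂ) ^ m * s₀)
        + h₁ ((a₀ : ℂ) ^ k * (a₁ : ℂ) ^ m * s₀)
          * Z ((a₀ : ℂ) ^ k * (a₁ : ℂ) ^ (m + 1) * s₀)), hr.1, hr.2]
    calc ‖Z ((a₀ : ℂ) ^ k * (a₁ : ℂ) ^ m * s₀) - _‖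
        ≤ ‖Z ((a₀ : ℂ) ^ k * (a₁ : ℂ) ^ m * s₀)‖ + _ := norm_sub_le _ _
      _ ≤ C + C := add_le_add (hC k m) hb
      _ = 2 * C := by ring
  have hLSbd : ∀ n : ℕ, ‖LS n‖ ≤ 2 * C := by
    intro n
    calc ‖LS n‖ ≤ ∑ k ∈ range (n + 1),
          ‖Kw k (n - k) * L ((a₀ : ℂ) ^ k * (a₁ : ℂ) ^ (n - k) * s₀)‖ :=
        norm_sum_le _ _
      _ ≤ ∑ k ∈ range (n + 1), ‖Kw k (n - k)‖ * (2 * C) := by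
        apply Finset.sum_le_sum
        intro k _
        rw [norm_mul]
        exact mul_le_mul_of_nonneg_left (hLbd k (n - k)) (norm_nonneg _)
      _ = (∑ k ∈ range (n + 1), ‖Kw k (n - k)‖) * (2 * C) := by rw [← Finset.sum_mul]
      _ ≤ 1 * (2 * C) := mul_le_mul_of_nonneg_right (part1 n) (by linarith)
      _ = 2 * C := one_mul _
  have hfb : ∀ i : ℕ, ‖(r : ℂ) ^ i * LS i‖ ≤ 2 * C * r ^ i := by
    intro i
    rw [norm_mul, norm_pow, hrc]
    calc r ^ i * ‖LS i‖ ≤ r ^ i * (2 * C) :=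
        mul_le_mul_of_nonneg_left (hLSbd i) (pow_nonneg hr.1 i)
      _ = 2 * C * r ^ i := by ring
  have hsum : Summable (fun i : ℕ => ‖(r : ℂ) ^ i * LS i‖) := by
    apply Summable.of_nonneg_of_le (fun i => norm_nonneg _) hfb
    exact (summable_geometric_of_lt_one hr.1 hr.2).mul_left (2 * C)
  have hsf : Summable (fun i : ℕ => (r : ℂ) ^ i * LS i) := hsum.of_norm
  have hzero : Filter.Tendsto (fun N : ℕ => (r : ℂ) ^ N * T N) Filter.atTop (nhds 0) := by
    have hb' : ∀ N : ℕ, ‖(r : ℂ) ^ N * T N‖ ≤ C * r ^ N := by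
      intro N
      rw [norm_mul, norm_pow, hrc]
      calc r ^ N * ‖T N‖ ≤ r ^ N * C :=
          mul_le_mul_of_nonneg_left (hTbd N) (pow_nonneg hr.1 N)
        _ = C * r ^ N := by ring
    have hg : Filter.Tendsto (fun N : ℕ => C * r ^ N) Filter.atTop (nhds 0) := by
      have := (tendsto_pow_atTop_nhds_zero_of_lt_one hr.1 hr.2).const_mul C
      simpa using this
    exact squeeze_zero_norm hb' hg
  have hpartial : Filter.Tendsto (fun N : ℕ => ∑ i ∈ range N, (r : ℂ) ^ i * LS i)
      Filter.atTop (nhds (Z s₀)) := by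
    have heq : ∀ N : ℕ, ∑ i ∈ range N, (r : ℂ) ^ i * LS i
        = Z s₀ - (r : ℂ) ^ N * T N := by
      intro N
      rw [htel N]; ring
    simp only [heq]
    have := Filter.Tendsto.sub (tendsto_const_nhds (x := Z s₀)) hzero
    simpa using this
  have htsum : (∑' i : ℕ, (r : ℂ) ^ i * LS i) = Z s₀ :=
    tendsto_nhds_unique hsf.hasSum.tendsto_sum_nat hpartial
  refine ⟨part1, hsum, ?_⟩
  have := hsf.hasSum
  rwa [htsum] at this
end

section
/- Let W be a nonnegative random variable and B exponentially distributed with rate μ > 0, with W and B independent, let a > 0 be real, and write Z(y) = E[exp(−y·W)]. Then for every real s ≥ 0, E[exp(−s·(W + max(B − a·W, 0)))] = Z(s) − (s/(μ + s))·Z(s + a·μ). -/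
open MeasureTheory ProbabilityTheory Real

open Set
open scoped ENNReal NNReal

lemma exp_int (t c : ℝ) (ht : 0 < t) : ∫ x in Ioi c, Real.exp (-t*x) = Real.exp (-t*c)/t := by
  have h := integral_comp_mul_left_Ioi (fun x => Real.exp (-x)) (t⁻¹ * (t*c)) ht
  simp only [smul_eq_mul] at h
  rw [show t * (t⁻¹ * (t*c)) = t*c by field_simp] at h
  rw [integral_exp_neg_Ioi] at h
  simp_rw [show ∀ x:ℝ, -t*x = -(t*x) from fun x => by ring,
    show t⁻¹*(t*c) = c by field_simp] at h ⊢
  rw [h]; field_simp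

lemma exp_pdf_real (μ : ℝ) (x : ℝ) :
    exponentialPDFReal μ x = if 0 ≤ x then μ * Real.exp (-(μ*x)) else 0 := by
  rw [exponentialPDFReal, gammaPDFReal]
  split_ifs with h
  · rw [Real.rpow_one, Real.Gamma_one, show (1:ℝ)-1 = 0 by ring, Real.rpow_zero]; ring
  · rfl

lemma expMeasure_integral (μ : ℝ) (hμ : 0 < μ) (g : ℝ → ℝ) :
    ∫ b, g b ∂(expMeasure μ) = ∫ x in Ioi 0, (μ * Real.exp (-(μ*x))) * g x := by
  have hpdf : exponentialPDF μ = fun x => ((Real.toNNReal (exponentialPDFReal μ x)) : ℝ≥0∞) := by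
    funext x; rw [exponentialPDF]; rfl
  have hm : Measurable fun x => Real.toNNReal (exponentialPDFReal μ x) :=
    (measurable_exponentialPDFReal μ).real_toNNReal
  rw [show expMeasure μ = volume.withDensity (exponentialPDF μ) from rfl, hpdf,
    integral_withDensity_eq_integral_smul hm]
  have heq : ∀ x, (Real.toNNReal (exponentialPDFReal μ x)) • g x
      = Set.indicator (Ici 0) (fun x => (μ * Real.exp (-(μ*x))) * g x) x := by
    intro x
    rw [NNReal.smul_def, Real.coe_toNNReal', exp_pdf_real]
    rcases le_or_gt 0 x with h | h
    · rw [if_pos h, Set.indicator_of_mem (mem_Ici.mpr h),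
        max_eq_left (by positivity), smul_eq_mul]
    · simp [not_le.mpr h, Set.indicator_of_notMem (by simpa using h.not_ge : x ∉ Ici 0)]
  simp_rw [heq]
  rw [integral_indicator measurableSet_Ici, integral_Ici_eq_integral_Ioi]

lemma inner_int (μ s c : ℝ) (hμ : 0 < μ) (hs : 0 ≤ s) (hc : 0 ≤ c) :
    ∫ b, Real.exp (-s * max (b - c) 0) ∂(expMeasure μ)
      = 1 - s/(μ+s) * Real.exp (-(μ*c)) := by
  have hμs : 0 < μ + s := by linarith
  rw [expMeasure_integral μ hμ]
  have hsplit : Ioc 0 c ∪ Ioi c = Ioi 0 := Ioc_union_Ioi_eq_Ioi hc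
  have hdisj : Disjoint (Ioc 0 c) (Ioi c) := Ioc_disjoint_Ioi le_rfl
  -- integrability of the two pieces
  have hint1 : IntegrableOn (fun x => (μ * Real.exp (-(μ*x))) * Real.exp (-s * max (x - c) 0))
      (Ioc 0 c) := by
    exact Continuous.integrableOn_Ioc (by continuity)
  have hint2 : IntegrableOn (fun x => (μ * Real.exp (-(μ*x))) * Real.exp (-s * max (x - c) 0))
      (Ioi c) := by
    have hb : IntegrableOn (fun x => (μ * Real.exp (s*c)) * Real.exp (-(μ+s) * x)) (Ioi c) :=
      ((exp_neg_integrableOn_Ioi c hμs).const_mul _)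
    apply hb.congr_fun ?_ measurableSet_Ioi
    intro x hx
    simp only [mem_Ioi] at hx
    beta_reduce
    rw [show max (x-c) (0:ℝ) = x - c from max_eq_left (by linarith),
      mul_assoc, mul_assoc, ← Real.exp_add, ← Real.exp_add]
    congr 1
    ring
  rw [← hsplit, setIntegral_union hdisj measurableSet_Ioi hint1 hint2]
  have e1 : ∫ x in Ioc 0 c, (μ * Real.exp (-(μ*x))) * Real.exp (-s * max (x - c) 0)
      = ∫ x in Ioc 0 c, μ * Real.exp (-μ*x) := by
    apply setIntegral_congr_fun measurableSet_Ioc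
    intro x hx
    simp only [mem_Ioc] at hx
    beta_reduce
    rw [show max (x-c) (0:ℝ) = 0 from max_eq_right (by linarith [hx.2]),
      mul_zero, Real.exp_zero, mul_one]
    ring_nf
  have e2 : ∫ x in Ioi c, (μ * Real.exp (-(μ*x))) * Real.exp (-s * max (x - c) 0)
      = (μ * Real.exp (s*c)) * (Real.exp (-(μ+s)*c)/(μ+s)) := by
    rw [← exp_int (μ+s) c hμs, ← integral_const_mul]
    apply setIntegral_congr_fun measurableSet_Ioi
    intro x hx
    simp only [mem_Ioi] at hx
    beta_reduce
    rw [show max (x-c) (0:ℝ) = x - c from max_eq_left (by linarith),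
      mul_assoc, mul_assoc, ← Real.exp_add, ← Real.exp_add]
    congr 1
    ring
  have e3 : (∫ x in Ioc 0 c, μ * Real.exp (-μ*x))
      = μ * (Real.exp (-μ*0)/μ - Real.exp (-μ*c)/μ) := by
    have hkey : (∫ x in Ioc 0 c, μ * Real.exp (-μ*x)) + ∫ x in Ioi c, μ * Real.exp (-μ*x)
        = ∫ x in Ioi 0, μ * Real.exp (-μ*x) := by
      rw [← hsplit, setIntegral_union hdisj measurableSet_Ioi]
      · exact Continuous.integrableOn_Ioc (by continuity)
      · exact ((exp_neg_integrableOn_Ioi c hμ).const_mul _)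
    have hIoi : ∀ d : ℝ, ∫ x in Ioi d, μ * Real.exp (-μ*x) = μ * (Real.exp (-μ*d)/μ) := by
      intro d; rw [← exp_int μ d hμ, ← integral_const_mul]
    rw [hIoi 0, hIoi c] at hkey
    linarith
  rw [e1, e2, e3]
  have hE : Real.exp (s*c) * Real.exp (-(μ+s)*c) = Real.exp (-(μ*c)) := by
    rw [← Real.exp_add]; congr 1; ring
  have h1 : Real.exp (-μ*c) = Real.exp (-(μ*c)) := by congr 1; ring
  rw [show (-μ)*(0:ℝ) = 0 by ring, Real.exp_zero, h1]
  have key : μ * Real.exp (s*c) * (Real.exp (-(μ+s)*c)/(μ+s)) = μ/(μ+s) * Real.exp (-(μ*c)) := by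
    rw [mul_assoc, ← mul_div_assoc, hE]
    ring
  rw [key]
  field_simp
  ring

/-- If `W` is a nonnegative random variable and `B` is exponential with
rate `μ > 0`, independent of `W`, and `a > 0`, then for every `s ≥ 0`,
`E[exp(-s·(W + max(B - a·W, 0)))] = Z(s) - (s/(μ+s))·Z(s + a·μ)`,
where `Z(y) = E[exp(-y·W)]`. -/
theorem lst_sojourn_with_truncated_service
    {Ω : Type*} [MeasurableSpace Ω] (P : Measure Ω) [IsProbabilityMeasure P]
    (W B : Ω → ℝ) (hWm : Measurable W) (hBm : Measurable B)
    (hWnonneg : ∀ ω, 0 ≤ W ω)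
    (μ : ℝ) (hμ : 0 < μ)
    (hBlaw : Measure.map B P = expMeasure μ)
    (hindep : IndepFun W B P)
    (a : ℝ) (ha : 0 < a)
    (s : ℝ) (hs : 0 ≤ s) :
    ∫ ω, Real.exp (-s * (W ω + max (B ω - a * W ω) 0)) ∂P
      = (∫ ω, Real.exp (-s * W ω) ∂P)
        - (s / (μ + s)) * ∫ ω, Real.exp (-(s + a * μ) * W ω) ∂P := by
  have hμs : 0 < μ + s := by linarith
  haveI hPexp : IsProbabilityMeasure (expMeasure μ) := isProbabilityMeasure_expMeasure hμ
  let F : ℝ × ℝ → ℝ := fun p => Real.exp (-s * (p.1 + max (p.2 - a * p.1) 0))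
  let G : ℝ → ℝ := fun w => Real.exp (-s*w) * (1 - s/(μ+s) * Real.exp (-(μ*(a*w))))
  have hFm : Measurable F := by
    apply Real.measurable_exp.comp
    apply Measurable.const_mul
    exact measurable_fst.add ((measurable_snd.sub (measurable_fst.const_mul a)).max measurable_const)
  have hGm : Measurable G := by
    apply Measurable.mul
    · exact Real.measurable_exp.comp (measurable_id.const_mul (-s))
    · apply Measurable.const_sub
      exact (Real.measurable_exp.comp ((measurable_id.const_mul a).const_mul μ).neg).const_mul _
  have hmap : P.map (fun ω => (W ω, B ω)) = (P.map W).prod (expMeasure μ) := by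
    rw [← hBlaw]
    exact (indepFun_iff_map_prod_eq_prod_map_map hWm.aemeasurable hBm.aemeasurable).mp hindep
  have hW0 : ∀ᵐ w ∂(P.map W), 0 ≤ w := by
    rw [show (fun w : ℝ => 0 ≤ w) = fun w => w ∈ Ici 0 from rfl] at *
    exact (MeasureTheory.ae_map_iff hWm.aemeasurable measurableSet_Ici).mpr (ae_of_all _ hWnonneg)
  have hW0' : (P.map W) (Iio 0) = 0 := by
    have := hW0
    rw [Filter.eventually_iff, mem_ae_iff] at this
    convert this using 2
    ext w; simp [not_le]
  have h1 : ∀ᵐ p ∂((P.map W).prod (expMeasure μ)), 0 ≤ p.1 := by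
    rw [Filter.eventually_iff, mem_ae_iff]
    have hset : {p : ℝ × ℝ | 0 ≤ p.1}ᶜ = Iio 0 ×ˢ univ := by
      ext p; simp [not_le]
    rw [hset, Measure.prod_prod, hW0']
    simp
  have hFint : Integrable F ((P.map W).prod (expMeasure μ)) := by
    apply (integrable_const (1:ℝ)).mono' hFm.aestronglyMeasurable
    filter_upwards [h1] with p hp
    show ‖Real.exp (-s * (p.1 + max (p.2 - a * p.1) 0))‖ ≤ 1
    simp only [Real.norm_eq_abs, Real.abs_exp]
    apply Real.exp_le_one_iff.mpr
    have hmax : (0:ℝ) ≤ max (p.2 - a * p.1) 0 := le_max_right _ _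
    nlinarith
  -- Step A : LHS as double integral
  have stepA : ∫ ω, Real.exp (-s * (W ω + max (B ω - a * W ω) 0)) ∂P
      = ∫ w, ∫ b, F (w, b) ∂(expMeasure μ) ∂(P.map W) := by
    rw [← MeasureTheory.integral_prod F hFint, ← hmap,
      integral_map (hWm.prodMk hBm).aemeasurable hFm.aestronglyMeasurable]
  -- Step B : inner integral
  have stepB : ∀ᵐ w ∂(P.map W), (∫ b, F (w, b) ∂(expMeasure μ)) = G w := by
    filter_upwards [hW0] with w hw
    have hc : 0 ≤ a * w := mul_nonneg ha.le hw
    have hfb : ∀ b, F (w, b) = Real.exp (-s*w) * Real.exp (-s * max (b - a*w) 0) := by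
      intro b
      show Real.exp (-s * (w + max (b - a * w) 0)) = _
      rw [← Real.exp_add]
      congr 1; ring
    simp_rw [hfb]
    rw [integral_const_mul, inner_int μ s (a*w) hμ hs hc]
  have stepC : ∫ ω, Real.exp (-s * (W ω + max (B ω - a * W ω) 0)) ∂P = ∫ ω, G (W ω) ∂P := by
    rw [stepA, integral_congr_ae stepB,
      integral_map hWm.aemeasurable hGm.aestronglyMeasurable]
  rw [stepC]
  have hGW : ∀ ω, G (W ω)
      = Real.exp (-s * W ω) - (s/(μ+s)) * Real.exp (-(s + a*μ) * W ω) := by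
    intro ω
    show Real.exp (-s * W ω) * (1 - s/(μ+s) * Real.exp (-(μ*(a*W ω)))) = _
    rw [mul_sub, mul_one, mul_left_comm, ← Real.exp_add,
      show -s * W ω + -(μ*(a*W ω)) = -(s + a*μ) * W ω by ring]
  have hI : ∀ t : ℝ, 0 ≤ t → Integrable (fun ω => Real.exp (-t * W ω)) P := by
    intro t ht
    apply (integrable_const (1:ℝ)).mono'
      ((Real.measurable_exp.comp (hWm.const_mul (-t))).aestronglyMeasurable)
    apply ae_of_all
    intro ω
    show ‖Real.exp (-t * W ω)‖ ≤ 1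
    simp only [Real.norm_eq_abs, Real.abs_exp]
    apply Real.exp_le_one_iff.mpr
    nlinarith [hWnonneg ω]
  simp_rw [hGW]
  rw [integral_sub (hI s hs) ((hI (s + a*μ) (by positivity)).const_mul _), integral_const_mul]
end

section
/- Let W be a nonnegative random variable, B exponentially distributed with rate μ > 0, and A exponentially distributed with rate λ > 0, with W, B, A mutually independent, let a > 0 be real, and write Z(y) = E[exp(−y·W)]. Then P(A > W + max(B − a·W, 0)) = Z(λ) − (λ/(μ + λ))·Z(λ + a·μ). -/
open MeasureTheory ProbabilityTheory Real

open scoped ENNReal NNReal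


-- tail lemma
lemma expMeasure_Ioi_s14 {r : ℝ} (hr : 0 < r) {x : ℝ} (hx : 0 ≤ x) :
    expMeasure r (Set.Ioi x) = ENNReal.ofReal (Real.exp (-(r * x))) := by
  have h : IsProbabilityMeasure (expMeasure r) := isProbabilityMeasure_expMeasure hr
  have hIic : expMeasure r (Set.Iic x) = ENNReal.ofReal (1 - Real.exp (-(r * x))) := by
    have h1 := cdf_expMeasure_eq hr x
    rw [cdf_eq_real, measureReal_def, if_pos hx] at h1
    rw [← ENNReal.ofReal_toReal (measure_ne_top (expMeasure r) (Set.Iic x)), h1]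
  have hcompl : Set.Ioi x = (Set.Iic x)ᶜ := by simp
  rw [hcompl, measure_compl measurableSet_Iic (measure_ne_top _ _), measure_univ, hIic]
  have he : Real.exp (-(r * x)) ≤ 1 := Real.exp_le_one_iff.mpr (by positivity |> neg_nonpos_of_nonneg)
  refine ENNReal.sub_eq_of_eq_add ENNReal.ofReal_ne_top ?_
  rw [← ENNReal.ofReal_add (by positivity) (by linarith), ← ENNReal.ofReal_one]
  ring_nf

lemma exponentialPDFReal_eq' (r x : ℝ) :
    exponentialPDFReal r x = if 0 ≤ x then r * Real.exp (-(r * x)) else 0 := by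
  rw [exponentialPDFReal, gammaPDFReal]
  simp only [rpow_one, Real.Gamma_one, div_one, sub_self, rpow_zero, mul_one]

lemma integral_expMeasure {r : ℝ} (hr : 0 < r) (g : ℝ → ℝ) :
    ∫ x, g x ∂(expMeasure r)
      = ∫ x in Set.Ioi (0:ℝ), r * Real.exp (-(r * x)) * g x := by
  have hpdf : expMeasure r = MeasureTheory.volume.withDensity
      (fun x => ((Real.toNNReal (exponentialPDFReal r x) : ℝ≥0) : ℝ≥0∞)) := rfl
  rw [hpdf, integral_withDensity_eq_integral_smul
      ((measurable_exponentialPDFReal r).real_toNNReal) g]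
  have : ∀ x : ℝ, (Real.toNNReal (exponentialPDFReal r x) : ℝ≥0) • g x
      = Set.indicator (Set.Ici (0:ℝ)) (fun x => r * Real.exp (-(r * x)) * g x) x := by
    intro x
    rw [NNReal.smul_def, smul_eq_mul, Real.coe_toNNReal _ (exponentialPDFReal_nonneg hr x),
      exponentialPDFReal_eq']
    rcases lt_trichotomy x 0 with h | h | h
    · rw [if_neg (not_le.mpr h), Set.indicator_of_notMem (by simp [h.not_ge]), zero_mul]
    · subst h; simp
    · rw [if_pos h.le, Set.indicator_of_mem (Set.mem_Ici.mpr h.le)]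
  simp_rw [this]
  rw [integral_indicator measurableSet_Ici, integral_Ici_eq_integral_Ioi]

-- helper: improper exponential integral
lemma integral_exp_neg_mul_Ioi {r : ℝ} (hr : 0 < r) (c : ℝ) :
    ∫ x in Set.Ioi c, Real.exp (-(r * x)) = r⁻¹ * Real.exp (-(r * c)) := by
  have := MeasureTheory.integral_comp_mul_left_Ioi (fun x => Real.exp (-x)) c hr
  simp only [smul_eq_mul] at this
  rw [this, integral_exp_neg_Ioi]

-- interval piece
lemma integral_exp_Ioc {r : ℝ} (hr : 0 < r) {c : ℝ} (hc : 0 ≤ c) :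
    ∫ b in Set.Ioc (0:ℝ) c, r * Real.exp (-(r * b)) = 1 - Real.exp (-(r * c)) := by
  rw [← intervalIntegral.integral_of_le hc]
  rw [intervalIntegral.integral_eq_sub_of_hasDerivAt
    (f := fun b => -Real.exp (-(r * b)))
    (fun x _ => ProbabilityTheory.hasDerivAt_neg_exp_mul_exp)
    (Continuous.intervalIntegrable (by continuity) 0 c)]
  simp [Real.exp_zero]; ring


lemma inner_exp_integral {μ lam : ℝ} (hμ : 0 < μ) (hlam : 0 < lam) {c : ℝ} (hc : 0 ≤ c) :
    ∫ b, Real.exp (-(lam * max (b - c) 0)) ∂(expMeasure μ)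
      = 1 - lam / (μ + lam) * Real.exp (-(μ * c)) := by
  rw [integral_expMeasure hμ]
  have hsplit : Set.Ioi (0:ℝ) = Set.Ioc 0 c ∪ Set.Ioi c := (Set.Ioc_union_Ioi_eq_Ioi hc).symm
  have hdisj : Disjoint (Set.Ioc (0:ℝ) c) (Set.Ioi c) := Set.Ioc_disjoint_Ioi le_rfl
  have hcont : Continuous (fun b => μ * Real.exp (-(μ * b)) * Real.exp (-(lam * max (b - c) 0))) := by
    continuity
  have hint2 : IntegrableOn (fun b => μ * Real.exp (-(μ * b)) * Real.exp (-(lam * max (b - c) 0)))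
      (Set.Ioi c) := by
    apply MeasureTheory.Integrable.mono'
      (g := fun b => (μ * Real.exp (lam * c)) * Real.exp (-((μ + lam) * b)))
      (((exp_neg_integrableOn_Ioi c (by linarith : (0:ℝ) < μ + lam)).congr_fun
        (fun x _ => by rw [neg_mul]) measurableSet_Ioi).const_mul _)
      hcont.aestronglyMeasurable
    filter_upwards [MeasureTheory.ae_restrict_mem measurableSet_Ioi] with b hb
    have hb' : c < b := hb
    rw [max_eq_left (by linarith : (0:ℝ) ≤ b - c), Real.norm_eq_abs,
      abs_of_nonneg (by positivity)]
    apply le_of_eq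
    rw [mul_assoc, ← Real.exp_add, mul_assoc, ← Real.exp_add]
    congr 2
    ring
  have hint1 : IntegrableOn (fun b => μ * Real.exp (-(μ * b)) * Real.exp (-(lam * max (b - c) 0)))
      (Set.Ioc 0 c) := hcont.integrableOn_Ioc
  rw [hsplit, MeasureTheory.setIntegral_union hdisj measurableSet_Ioi hint1 hint2]
  have e1 : ∫ b in Set.Ioc (0:ℝ) c, μ * Real.exp (-(μ * b)) * Real.exp (-(lam * max (b - c) 0))
      = 1 - Real.exp (-(μ * c)) := by
    rw [MeasureTheory.setIntegral_congr_fun measurableSet_Ioc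
      (g := fun b => μ * Real.exp (-(μ * b)))
      (fun b hb => by simp only []; rw [max_eq_right (by linarith [hb.2] : b - c ≤ 0), mul_zero,
        neg_zero, Real.exp_zero, mul_one])]
    exact integral_exp_Ioc hμ hc
  have e2 : ∫ b in Set.Ioi c, μ * Real.exp (-(μ * b)) * Real.exp (-(lam * max (b - c) 0))
      = μ / (μ + lam) * Real.exp (-(μ * c)) := by
    rw [MeasureTheory.setIntegral_congr_fun measurableSet_Ioi
      (g := fun b => (μ * Real.exp (lam * c)) * Real.exp (-((μ + lam) * b)))
      (fun b hb => by
        simp only []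
        rw [max_eq_left (by linarith [Set.mem_Ioi.mp hb] : (0:ℝ) ≤ b - c),
          mul_assoc, ← Real.exp_add, mul_assoc, ← Real.exp_add]
        congr 2
        ring)]
    rw [MeasureTheory.integral_const_mul, integral_exp_neg_mul_Ioi (by linarith) c]
    rw [mul_comm (μ + lam)⁻¹, mul_assoc, ← mul_assoc (Real.exp (lam * c)), ← Real.exp_add]
    rw [div_eq_mul_inv]
    ring_nf
  rw [e1, e2]
  have h : μ + lam ≠ 0 := by linarith
  field_simp
  ring

lemma prob_lt_of_indep {Ω : Type*} [MeasurableSpace Ω] (P : Measure Ω) [IsProbabilityMeasure P]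
    (X Y : Ω → ℝ) (hX : Measurable X) (hY : Measurable Y) (hXnn : ∀ ω, 0 ≤ X ω)
    {lam : ℝ} (hlam : 0 < lam) (hYlaw : Measure.map Y P = expMeasure lam)
    (hind : IndepFun X Y P) :
    (P {ω | X ω < Y ω}).toReal = ∫ ω, Real.exp (-(lam * X ω)) ∂P := by
  have hexp : IsProbabilityMeasure (expMeasure lam) := isProbabilityMeasure_expMeasure hlam
  have hmap : Measure.map (fun ω => (X ω, Y ω)) P = (Measure.map X P).prod (Measure.map Y P) :=
    (indepFun_iff_map_prod_eq_prod_map_map hX.aemeasurable hY.aemeasurable).mp hind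
  have hS : MeasurableSet {p : ℝ × ℝ | p.1 < p.2} := measurableSet_lt measurable_fst measurable_snd
  have hset : {ω | X ω < Y ω} = (fun ω => (X ω, Y ω)) ⁻¹' {p : ℝ × ℝ | p.1 < p.2} := rfl
  have hae : ∀ᵐ x ∂(Measure.map X P), 0 ≤ x := by
    rw [ae_iff]
    have : {x : ℝ | ¬ 0 ≤ x} = Set.Iio 0 := by ext x; simp
    rw [this, Measure.map_apply hX measurableSet_Iio]
    have : X ⁻¹' Set.Iio 0 = ∅ := by
      ext ω; simp [not_lt.mpr (hXnn ω)]
    simp [this]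
  have key : P {ω | X ω < Y ω}
      = ∫⁻ ω, ENNReal.ofReal (Real.exp (-(lam * X ω))) ∂P := by
    rw [hset, ← Measure.map_apply (hX.prodMk hY) hS, hmap, hYlaw,
      Measure.prod_apply hS]
    have h1 : ∀ x : ℝ, (Prod.mk x ⁻¹' {p : ℝ × ℝ | p.1 < p.2}) = Set.Ioi x := by
      intro x; ext y; simp
    simp_rw [h1]
    rw [lintegral_congr_ae (hae.mono fun x hx => expMeasure_Ioi_s14 hlam hx)]
    exact lintegral_map (f := fun x => ENNReal.ofReal (Real.exp (-(lam * x))))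
      (ENNReal.measurable_ofReal.comp ((measurable_id.const_mul lam).neg.exp)) hX
  rw [key, MeasureTheory.integral_eq_lintegral_of_nonneg_ae (f := fun ω => Real.exp (-(lam * X ω)))
    (Filter.Eventually.of_forall fun ω => (Real.exp_pos _).le)
    ((hX.const_mul lam).neg.exp).aestronglyMeasurable]



set_option maxHeartbeats 2000000 in
/-- If `W` is nonnegative, `B` exponential with rate `μ > 0`, and `A`
exponential with rate `λ > 0`, all mutually independent, and `a > 0`, then
`P(A > W + max(B - a·W, 0)) = Z(λ) - (λ/(μ+λ))·Z(λ + a·μ)`,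
where `Z(y) = E[exp(-y·W)]`. -/
theorem prob_interarrival_exceeds_sojourn
    {Ω : Type*} [MeasurableSpace Ω] (P : Measure Ω) [IsProbabilityMeasure P]
    (W B A : Ω → ℝ) (hWm : Measurable W) (hBm : Measurable B) (hAm : Measurable A)
    (hWnonneg : ∀ ω, 0 ≤ W ω)
    (μ lam : ℝ) (hμ : 0 < μ) (hlam : 0 < lam)
    (hBlaw : Measure.map B P = expMeasure μ)
    (hAlaw : Measure.map A P = expMeasure lam)
    (hindep : iIndepFun ![W, B, A] P)
    (a : ℝ) (ha : 0 < a) :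
    (P {ω | A ω > W ω + max (B ω - a * W ω) 0}).toReal
      = (∫ ω, Real.exp (-lam * W ω) ∂P)
        - (lam / (μ + lam)) * ∫ ω, Real.exp (-(lam + a * μ) * W ω) ∂P := by
  have hexpμ : IsProbabilityMeasure (expMeasure μ) := isProbabilityMeasure_expMeasure hμ
  have hPW : IsProbabilityMeasure (Measure.map W P) := Measure.isProbabilityMeasure_map hWm.aemeasurable
  have hmeas3 : ∀ i, Measurable (![W, B, A] i) := by
    intro i; fin_cases i <;> simpa
  set g : Ω → ℝ := fun ω => W ω + max (B ω - a * W ω) 0 with hg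
  have hgm : Measurable g := hWm.add ((hBm.sub (hWm.const_mul a)).max measurable_const)
  have hgnn : ∀ ω, 0 ≤ g ω := fun ω => add_nonneg (hWnonneg ω) (le_max_right _ _)
  have hpairA : IndepFun (fun ω => (W ω, B ω)) A P := by
    have := hindep.indepFun_prodMk hmeas3 0 1 2 (by decide) (by decide)
    simpa using this
  have hgA : IndepFun g A P := by
    have hφ : Measurable (fun p : ℝ × ℝ => p.1 + max (p.2 - a * p.1) 0) :=
      measurable_fst.add ((measurable_snd.sub (measurable_fst.const_mul a)).max measurable_const)
    exact hpairA.comp hφ measurable_id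
  have step1 : (P {ω | A ω > W ω + max (B ω - a * W ω) 0}).toReal
      = ∫ ω, Real.exp (-(lam * g ω)) ∂P :=
    prob_lt_of_indep P g A hgm hAm hgnn hlam hAlaw hgA
  rw [step1]
  -- rewrite using the two-variable function F
  set F : ℝ × ℝ → ℝ := fun p =>
    Real.exp (-(lam * max p.1 0)) * Real.exp (-(lam * max (p.2 - a * max p.1 0) 0)) with hF
  have hFcont : Continuous F := by
    apply Continuous.mul <;> exact Real.continuous_exp.comp (by continuity)
  have hFbound : ∀ p : ℝ × ℝ, ‖F p‖ ≤ 1 := by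
    intro p
    rw [hF, Real.norm_eq_abs, abs_of_nonneg (by positivity)]
    have h1 : Real.exp (-(lam * max p.1 0)) ≤ 1 :=
      Real.exp_le_one_iff.mpr (neg_nonpos_of_nonneg (by positivity))
    have h2 : Real.exp (-(lam * max (p.2 - a * max p.1 0) 0)) ≤ 1 :=
      Real.exp_le_one_iff.mpr (neg_nonpos_of_nonneg (by positivity))
    calc Real.exp (-(lam * max p.1 0)) * Real.exp (-(lam * max (p.2 - a * max p.1 0) 0))
        ≤ 1 * 1 := by gcongr <;> first | exact (Real.exp_pos _).le | assumption
      _ = 1 := by ring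
  have hFeq : ∀ ω, Real.exp (-(lam * g ω)) = F (W ω, B ω) := by
    intro ω
    rw [hF]
    simp only [hg]
    rw [max_eq_left (hWnonneg ω), ← Real.exp_add]
    congr 1
    ring
  have hWB : IndepFun W B P := by
    have := hindep.indepFun (show (0 : Fin 3) ≠ 1 by decide)
    simpa using this
  have hmapWB : Measure.map (fun ω => (W ω, B ω)) P = (Measure.map W P).prod (expMeasure μ) := by
    rw [← hBlaw]
    exact (indepFun_iff_map_prod_eq_prod_map_map hWm.aemeasurable hBm.aemeasurable).mp hWB
  have hFint : Integrable F ((Measure.map W P).prod (expMeasure μ)) :=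
    Integrable.mono' (integrable_const 1) hFcont.aestronglyMeasurable
      (Filter.Eventually.of_forall hFbound)
  have step2 : ∫ ω, Real.exp (-(lam * g ω)) ∂P
      = ∫ x, ∫ y, F (x, y) ∂(expMeasure μ) ∂(Measure.map W P) := by
    calc ∫ ω, Real.exp (-(lam * g ω)) ∂P = ∫ ω, F (W ω, B ω) ∂P := by
          exact integral_congr_ae (Filter.Eventually.of_forall hFeq)
      _ = ∫ p, F p ∂(Measure.map (fun ω => (W ω, B ω)) P) :=
          (integral_map (hWm.prodMk hBm).aemeasurable hFcont.aestronglyMeasurable).symm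
      _ = ∫ p, F p ∂((Measure.map W P).prod (expMeasure μ)) := by rw [hmapWB]
      _ = _ := MeasureTheory.integral_prod F hFint
  rw [step2]
  have hinner : ∀ x : ℝ, ∫ y, F (x, y) ∂(expMeasure μ)
      = Real.exp (-(lam * max x 0))
        - lam / (μ + lam) * Real.exp (-((lam + a * μ) * max x 0)) := by
    intro x
    simp only [hF]
    rw [MeasureTheory.integral_const_mul,
      inner_exp_integral hμ hlam (c := a * max x 0) (by positivity)]
    rw [mul_sub, mul_one]
    congr 1
    rw [mul_left_comm, ← Real.exp_add]  -- careful
    congr 2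
    ring
  simp_rw [hinner]
  have hc1 : Continuous (fun x : ℝ => Real.exp (-(lam * max x 0))) := by continuity
  have hc2 : Continuous (fun x : ℝ => Real.exp (-((lam + a * μ) * max x 0))) := by continuity
  have hb1 : Integrable (fun x : ℝ => Real.exp (-(lam * max x 0))) (Measure.map W P) :=
    Integrable.mono' (integrable_const 1) hc1.aestronglyMeasurable
      (Filter.Eventually.of_forall fun x => by
        rw [Real.norm_eq_abs, abs_of_nonneg (Real.exp_pos _).le]
        exact Real.exp_le_one_iff.mpr (neg_nonpos_of_nonneg (by positivity)))
  have hb2 : Integrable (fun x : ℝ => Real.exp (-((lam + a * μ) * max x 0))) (Measure.map W P) :=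
    Integrable.mono' (integrable_const 1) hc2.aestronglyMeasurable
      (Filter.Eventually.of_forall fun x => by
        rw [Real.norm_eq_abs, abs_of_nonneg (Real.exp_pos _).le]
        refine Real.exp_le_one_iff.mpr (neg_nonpos_of_nonneg ?_)
        have : (0:ℝ) ≤ lam + a * μ := by positivity
        positivity)
  rw [MeasureTheory.integral_sub hb1 (hb2.const_mul _), MeasureTheory.integral_const_mul]
  have hfin1 : ∫ x, Real.exp (-(lam * max x 0)) ∂(Measure.map W P)
      = ∫ ω, Real.exp (-lam * W ω) ∂P := by
    rw [integral_map hWm.aemeasurable hc1.aestronglyMeasurable]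
    exact integral_congr_ae (Filter.Eventually.of_forall fun ω => by
      simp only []; rw [max_eq_left (hWnonneg ω), neg_mul])
  have hfin2 : ∫ x, Real.exp (-((lam + a * μ) * max x 0)) ∂(Measure.map W P)
      = ∫ ω, Real.exp (-(lam + a * μ) * W ω) ∂P := by
    rw [integral_map hWm.aemeasurable hc2.aestronglyMeasurable]
    exact integral_congr_ae (Filter.Eventually.of_forall fun ω => by
      simp only []; rw [max_eq_left (hWnonneg ω), neg_mul])
  rw [hfin1, hfin2]
end

section
/- Let a ∈ (0,1), δ > 0, let p_1,…,p_K ≥ 0 with Σ_i p_i = 1 and β̄_1,…,β̄_K ∈ (0,1), let φ_B : [0,∞) → ℝ, and let Z : [0,∞) → ℝ be bounded, continuous at 0 with Z(0) = 1, satisfying (δ − s)·Z(s) = δ·(Σ_{i=1}^K p_i·φ_B(s·β̄_i))·Z(a·s) − s·Z(a·δ)·Σ_{i=1}^K p_i·φ_B(δ·β̄_i) for every s ≥ 0 with s ≠ δ·a^{−n} for all integers n ≥ 0. Assume the infinite product Π := ∏_{j=0}^∞ ( Σ_{i=1}^K p_i·φ_B(a^{j+1}·δ·β̄_i） / (1 −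 a^{j+1}) ) converges and the series S := Σ_{n=0}^∞ ( a^{n+1}/(1 − a^{n+1}) ) · ∏_{j=0}^{n−1} ( Σ_{i=1}^K p_i·φ_B(a^{j+1}·δ·β̄_i) / (1 − a^{j+1}) ) converges. Then Z(a·δ)·( 1 + (Σ_{i=1}^K p_i·φ_B(δ·β̄_i))·S ) = Π. -/
open Filter Finset

/-- Determination of `Z(a·δ)` for the stationary transform equation of
the queue `W_{n+1} = max(a·W_n + (1-G_n)·B_n - J_n, 0)`: if `Z` is bounded on `[0,∞)`,
continuous at `0` with `Z(0) = 1`, and satisfies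
`(δ-s)·Z(s) = δ·(Σᵢ pᵢ·φ_B(s·β̄ᵢ))·Z(a·s) - s·Z(a·δ)·Σᵢ pᵢ·φ_B(δ·β̄ᵢ)`
for every `s ≥ 0` avoiding the points `δ·a⁻ⁿ`, and if the infinite product
`Π = ∏ⱼ (Σᵢ pᵢ·φ_B(a^{j+1}·δ·β̄ᵢ))/(1-a^{j+1})` and the series
`S = Σₙ (a^{n+1}/(1-a^{n+1}))·∏_{j<n} (Σᵢ pᵢ·φ_B(a^{j+1}·δ·β̄ᵢ))/(1-a^{j+1})` converge,
then `Z(a·δ)·(1 + (Σᵢ pᵢ·φ_B(δ·β̄ᵢ))·S) = Π`. -/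
theorem stationary_atom_equation
    (a : ℝ) (ha : a ∈ Set.Ioo (0 : ℝ) 1) (δ : ℝ) (hδ : 0 < δ)
    (K : ℕ) (p βb : Fin K → ℝ) (hp : ∀ i, 0 ≤ p i) (hpsum : ∑ i, p i = 1)
    (hβb : ∀ i, βb i ∈ Set.Ioo (0 : ℝ) 1)
    (φB Z : ℝ → ℝ)
    (hZbd : ∃ C, ∀ s : ℝ, 0 ≤ s → |Z s| ≤ C)
    (hZcont : ContinuousAt Z 0) (hZ0 : Z 0 = 1)
    (hfe : ∀ s : ℝ, 0 ≤ s → (∀ n : ℕ, s ≠ δ / a ^ n) →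
      (δ - s) * Z s
        = δ * (∑ i, p i * φB (s * βb i)) * Z (a * s)
          - s * Z (a * δ) * ∑ i, p i * φB (δ * βb i))
    (Pi S : ℝ)
    (hPi : Tendsto
      (fun N => ∏ j ∈ range N, (∑ i, p i * φB (a ^ (j + 1) * δ * βb i)) / (1 - a ^ (j + 1)))
      atTop (nhds Pi))
    (hS : Tendsto
      (fun N => ∑ n ∈ range N, (a ^ (n + 1) / (1 - a ^ (n + 1)))
        * ∏ j ∈ range n, (∑ i, p i * φB (a ^ (j + 1) * δ * βb i)) / (1 - a ^ (j + 1)))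
      atTop (nhds S)) :
    Z (a * δ) * (1 + (∑ i, p i * φB (δ * βb i)) * S) = Pi := by

  obtain ⟨ha0, ha1⟩ := ha
  set D := ∑ i, p i * φB (δ * βb i) with hD
  set c : ℕ → ℝ := fun j =>
    (∑ i, p i * φB (a ^ (j + 1) * δ * βb i)) / (1 - a ^ (j + 1)) with hc
  have hapow : ∀ n : ℕ, a ^ (n + 1) < 1 := fun n =>
    pow_lt_one₀ ha0.le ha1 (Nat.succ_ne_zero n)
  have key : ∀ N : ℕ,
      Z (a * δ) * (1 + D * ∑ n ∈ range N,
          (a ^ (n + 1) / (1 - a ^ (n + 1))) * ∏ j ∈ range n, c j)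
        = (∏ j ∈ range N, c j) * Z (a ^ (N + 1) * δ) := by
    intro N
    induction N with
    | zero => simp [pow_one]
    | succ N ih =>
      have hu : (0 : ℝ) < 1 - a ^ (N + 1) := by linarith [hapow N]
      have hune : (1 - a ^ (N + 1)) ≠ 0 := ne_of_gt hu
      have hs : (0 : ℝ) ≤ a ^ (N + 1) * δ := by positivity
      have hne : ∀ n : ℕ, a ^ (N + 1) * δ ≠ δ / a ^ n := by
        intro n
        have h1 : a ^ (N + 1) * δ < δ := by
          nlinarith [hapow N, hδ]
        have h2 : δ ≤ δ / a ^ n := by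
          rw [le_div_iff₀ (pow_pos ha0 n)]
          nlinarith [pow_le_one₀ ha0.le ha1.le (n := n), hδ]
        exact ne_of_lt (lt_of_lt_of_le h1 h2)
      have h := hfe _ hs hne
      have haa : a * (a ^ (N + 1) * δ) = a ^ (N + 1 + 1) * δ := by ring
      rw [haa] at h
      have u_eq : (1 - a ^ (N + 1)) * Z (a ^ (N + 1) * δ)
          = (∑ i, p i * φB (a ^ (N + 1) * δ * βb i)) * Z (a ^ (N + 1 + 1) * δ)
            - a ^ (N + 1) * (Z (a * δ) * D) := by
        have h' : δ * ((1 - a ^ (N + 1)) * Z (a ^ (N + 1) * δ))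
            = δ * ((∑ i, p i * φB (a ^ (N + 1) * δ * βb i)) * Z (a ^ (N + 1 + 1) * δ)
              - a ^ (N + 1) * (Z (a * δ) * D)) := by linear_combination h
        exact mul_left_cancel₀ (ne_of_gt hδ) h'
      have hR : (1 - a ^ (N + 1)) * (1 - a ^ (N + 1))⁻¹ = 1 := mul_inv_cancel₀ hune
      rw [sum_range_succ, prod_range_succ]
      simp only [hc]
      linear_combination ih
        + (1 - a ^ (N + 1))⁻¹ * (∏ j ∈ range N, c j) * u_eq
        - (∏ j ∈ range N, c j) * Z (a ^ (N + 1) * δ) * hR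
  have zarg : Tendsto (fun N : ℕ => a ^ (N + 1) * δ) atTop (nhds 0) := by
    have h1 : Tendsto (fun N : ℕ => a ^ (N + 1)) atTop (nhds 0) :=
      (tendsto_pow_atTop_nhds_zero_of_lt_one ha0.le ha1).comp (tendsto_add_atTop_nat 1)
    simpa using h1.mul_const δ
  have zlim : Tendsto (fun N : ℕ => Z (a ^ (N + 1) * δ)) atTop (nhds 1) := by
    have := hZcont.tendsto.comp zarg
    rwa [hZ0] at this
  have lim1 : Tendsto (fun N => (∏ j ∈ range N, c j) * Z (a ^ (N + 1) * δ))
      atTop (nhds (Pi * 1)) := hPi.mul zlim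
  have lim2 : Tendsto (fun N => Z (a * δ) * (1 + D * ∑ n ∈ range N,
      (a ^ (n + 1) / (1 - a ^ (n + 1))) * ∏ j ∈ range n, c j))
      atTop (nhds (Z (a * δ) * (1 + D * S))) :=
    tendsto_const_nhds.mul (tendsto_const_nhds.add (tendsto_const_nhds.mul hS))
  have lim2' : Tendsto (fun N => (∏ j ∈ range N, c j) * Z (a ^ (N + 1) * δ))
      atTop (nhds (Z (a * δ) * (1 + D * S))) := by
    refine lim2.congr fun N => key N
  have := tendsto_nhds_unique lim2' lim1
  rw [mul_one] at this
  exact this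
end
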